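/- arXiv:1705.01884 — 3 statements merged into one kernel-verified Lean document; each statement's English description precedes it below -/
import Mathlib

section
/- The set 𝓛 = {f ∈ Homeo⁺([0,1]) : fix(f) has no accumulation point in the open interval (0,1)} is co-Haar null in Homeo⁺([0,1]). -/
open MeasureTheory unitInterval Set

noncomputable section

/-- A subset of a group with a measurable structure is *Haar null* (Christensen) if it is
contained in a Borel (here: measurable) set `B` admitting a Borel probability measure `μ`
all of whose two-sided translates `g • B • h` are `μ`-null. -/
def IsHaarNull {G : Type*} [Group G] [MeasurableSpace G] (A : Set G) : Prop :=
  ∃ B : Set G, A ⊆ B ∧ MeasurableSet B ∧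
    ∃ μ : Measure G, IsProbabilityMeasure μ ∧ ∀ g h : G, μ ((fun b => g * b * h) '' B) = 0

/-- The group of self-homeomorphisms of a space, with `(f * g) x = f (g x)`. -/
instance Homeomorph.instGroupSelf {X : Type*} [TopologicalSpace X] : Group (X ≃ₜ X) where
  mul f g := g.trans f
  one := Homeomorph.refl X
  inv := Homeomorph.symm
  mul_assoc _ _ _ := Homeomorph.ext fun _ => rfl
  one_mul _ := Homeomorph.ext fun _ => rfl
  mul_one _ := Homeomorph.ext fun _ => rfl
  inv_mul_cancel f := Homeomorph.ext fun x => f.symm_apply_apply x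

/-- The topology of uniform convergence (= compact-open topology, as the underlying space is
compact) on the self-homeomorphism group. -/
instance Homeomorph.instTopologicalSpaceSelf {X : Type*} [TopologicalSpace X] :
    TopologicalSpace (X ≃ₜ X) :=
  TopologicalSpace.induced (fun f => (⟨⇑f, f.continuous⟩ : C(X, X))) inferInstance

/-- The Polish group `Homeo⁺([0,1])` of increasing homeomorphisms of `[0,1]`. -/
def HomeoPlusI : Subgroup (I ≃ₜ I) where
  carrier := {f | Monotone ⇑f}
  one_mem' := fun _ _ h => h
  mul_mem' := fun hf hg => hf.comp hg
  inv_mem' := by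
    intro f hf a b hab
    show f.symm a ≤ f.symm b
    by_contra hcon
    push_neg at hcon
    have h1 : f (f.symm b) ≤ f (f.symm a) := hf hcon.le
    rw [f.apply_symm_apply, f.apply_symm_apply] at h1
    have : a = b := le_antisymm hab h1
    subst this
    exact lt_irrefl _ hcon

instance : MeasurableSpace HomeoPlusI := borel _
instance : BorelSpace HomeoPlusI := ⟨rfl⟩

/-- The set of fixed points of `f ∈ Homeo⁺([0,1])`. -/
def fixSet (f : HomeoPlusI) : Set I := {x | (f : I ≃ₜ I) x = x}



open Filter Topology

namespace HP

/-- Coercion to continuous maps. -/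
def ι (f : HomeoPlusI) : C(I, I) := ⟨⇑(f : I ≃ₜ I), (f : I ≃ₜ I).continuous⟩

lemma isInducing_ι : Topology.IsInducing ι := by
  constructor
  show TopologicalSpace.induced (Subtype.val) (TopologicalSpace.induced _ _) = _
  rw [induced_compose]
  rfl

lemma continuous_ι : Continuous ι := isInducing_ι.continuous

lemma continuous_into {α : Type*} [TopologicalSpace α] {F : α → HomeoPlusI}
    (h : Continuous fun a => ι (F a)) : Continuous F :=
  isInducing_ι.continuous_iff.mpr h

lemma mono (f : HomeoPlusI) : Monotone ⇑(f : I ≃ₜ I) := f.2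

lemma mul_apply (f g : HomeoPlusI) (x : I) :
    ((f * g : HomeoPlusI) : I ≃ₜ I) x = (f : I ≃ₜ I) ((g : I ≃ₜ I) x) := rfl

lemma inv_apply (f : HomeoPlusI) (x : I) :
    ((f⁻¹ : HomeoPlusI) : I ≃ₜ I) x = ((f : I ≃ₜ I)).symm x := rfl

lemma map_zero (f : HomeoPlusI) : (f : I ≃ₜ I) 0 = 0 := by
  have h1 : (f : I ≃ₜ I) ((f : I ≃ₜ I).symm 0) = 0 := (f : I ≃ₜ I).apply_symm_apply 0
  have h2 : (f : I ≃ₜ I) 0 ≤ (f : I ≃ₜ I) ((f : I ≃ₜ I).symm 0) :=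
    mono f (unitInterval.nonneg' )
  rw [h1] at h2
  exact le_antisymm h2 unitInterval.nonneg'

lemma map_one' (f : HomeoPlusI) : (f : I ≃ₜ I) 1 = 1 := by
  have h1 : (f : I ≃ₜ I) ((f : I ≃ₜ I).symm 1) = 1 := (f : I ≃ₜ I).apply_symm_apply 1
  have h2 : (f : I ≃ₜ I) ((f : I ≃ₜ I).symm 1) ≤ (f : I ≃ₜ I) 1 :=
    mono f (unitInterval.le_one')
  rw [h1] at h2
  exact le_antisymm unitInterval.le_one' h2

lemma ne_zero {f : HomeoPlusI} {x : I} (hx : x ≠ 0) : (f : I ≃ₜ I) x ≠ 0 := by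
  intro h
  exact hx (((f : I ≃ₜ I)).injective (h.trans (map_zero f).symm))

lemma ne_one {f : HomeoPlusI} {x : I} (hx : x ≠ 1) : (f : I ≃ₜ I) x ≠ 1 := by
  intro h
  exact hx (((f : I ≃ₜ I)).injective (h.trans (map_one' f).symm))

lemma isClosed_fixSet (f : HomeoPlusI) : IsClosed (fixSet f) :=
  isClosed_eq (f : I ≃ₜ I).continuous continuous_id

end HP

namespace HP

/-- `x ↦ x ^ b` as an element of `HomeoPlusI`, for `b > 0`. -/
def pI (b : ℝ) (hb : 0 < b) : HomeoPlusI := by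
  refine ⟨{ toFun := fun x => ⟨(x : ℝ) ^ b, ?_, ?_⟩
            invFun := fun x => ⟨(x : ℝ) ^ (1/b), ?_, ?_⟩
            left_inv := ?_
            right_inv := ?_
            continuous_toFun := ?_
            continuous_invFun := ?_ }, ?_⟩
  · exact Real.rpow_nonneg x.2.1 b
  · exact Real.rpow_le_one x.2.1 x.2.2 hb.le
  · exact Real.rpow_nonneg x.2.1 _
  · exact Real.rpow_le_one x.2.1 x.2.2 (by positivity)
  · intro x
    ext
    show ((x : ℝ) ^ b) ^ (1/b) = (x : ℝ)
    rw [← Real.rpow_mul x.2.1, mul_one_div_cancel hb.ne', Real.rpow_one]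
  · intro x
    ext
    show ((x : ℝ) ^ (1/b)) ^ b = (x : ℝ)
    rw [← Real.rpow_mul x.2.1, one_div_mul_cancel hb.ne', Real.rpow_one]
  · exact Continuous.subtype_mk
      (continuous_subtype_val.rpow_const fun x => Or.inr hb.le) _
  · exact Continuous.subtype_mk
      (continuous_subtype_val.rpow_const fun x => Or.inr (by positivity)) _
  · intro x y hxy
    show ((x:ℝ)^b : ℝ) ≤ (y:ℝ)^b
    exact Real.rpow_le_rpow x.2.1 hxy hb.le

lemma pI_apply (b : ℝ) (hb : 0 < b) (x : I) :
    (((pI b hb : HomeoPlusI) : I ≃ₜ I) x : ℝ) = (x : ℝ) ^ b := rfl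

/-- junk-padded exponent. -/
def ee (a : ℝ) : ℝ := 1 + max 0 (min a 1)

lemma ee_pos (a : ℝ) : 0 < ee a := by
  have : (0:ℝ) ≤ max 0 (min a 1) := le_max_left _ _
  unfold ee; linarith

lemma ee_of_mem {a : ℝ} (h : a ∈ Set.Ioo (0:ℝ) 1) : ee a = 1 + a := by
  unfold ee
  rw [min_eq_left h.2.le, max_eq_right h.1.le]

lemma continuous_ee : Continuous ee := by
  unfold ee; fun_prop

/-- The random family. -/
def FF (a : ℝ) : HomeoPlusI := pI (ee a) (ee_pos a)

lemma continuous_FF : Continuous FF := by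
  apply continuous_into
  have hG : Continuous fun p : ℝ × I => (⟨(p.2 : ℝ) ^ ee p.1,
      Real.rpow_nonneg p.2.2.1 _, Real.rpow_le_one p.2.2.1 p.2.2.2 (ee_pos p.1).le⟩ : I) := by
    refine Continuous.subtype_mk ?_ _
    exact Continuous.rpow (continuous_subtype_val.comp continuous_snd)
      (continuous_ee.comp continuous_fst) fun p => Or.inr (ee_pos p.1)
  have : (fun a => ι (FF a)) = ⇑((ContinuousMap.mk _ hG).curry) := by
    ext a x
    rfl
  rw [this]
  exact ((ContinuousMap.mk _ hG).curry).continuous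

end HP

namespace HP

/-- Elementary pieces of the Borel hull of the bad set. -/
def Bknm (k n m : ℕ) : Set HomeoPlusI :=
  {f | ∃ x y : I, (f : I ≃ₜ I) x = x ∧ (f : I ≃ₜ I) y = y ∧
    (1:ℝ)/(k+2) ≤ (x:ℝ) ∧ (x:ℝ) ≤ 1 - 1/(k+2) ∧
    (1:ℝ)/(k+2) ≤ (y:ℝ) ∧ (y:ℝ) ≤ 1 - 1/(k+2) ∧
    (1:ℝ)/(m+1) ≤ (y:ℝ) - (x:ℝ) ∧ (y:ℝ) - (x:ℝ) ≤ 1/(n+1)}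

/-- The Borel hull of the bad set. -/
def BB : Set HomeoPlusI := ⋃ k : ℕ, ⋂ n : ℕ, ⋃ m : ℕ, Bknm k n m

lemma isClosed_Bknm (k n m : ℕ) : IsClosed (Bknm k n m) := by
  have hev1 : Continuous fun p : C(I, I) × (I × I) => p.1 p.2.1 :=
    continuous_eval.comp (continuous_fst.prodMk (continuous_fst.comp continuous_snd))
  have hev2 : Continuous fun p : C(I, I) × (I × I) => p.1 p.2.2 :=
    continuous_eval.comp (continuous_fst.prodMk (continuous_snd.comp continuous_snd))
  have hx : Continuous fun p : C(I, I) × (I × I) => ((p.2.1 : I) : ℝ) :=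
    continuous_subtype_val.comp (continuous_fst.comp continuous_snd)
  have hy : Continuous fun p : C(I, I) × (I × I) => ((p.2.2 : I) : ℝ) :=
    continuous_subtype_val.comp (continuous_snd.comp continuous_snd)
  have hD : IsClosed {p : C(I, I) × (I × I) | p.1 p.2.1 = p.2.1 ∧ p.1 p.2.2 = p.2.2 ∧
      (1:ℝ)/(k+2) ≤ (p.2.1:ℝ) ∧ (p.2.1:ℝ) ≤ 1 - 1/(k+2) ∧
      (1:ℝ)/(k+2) ≤ (p.2.2:ℝ) ∧ (p.2.2:ℝ) ≤ 1 - 1/(k+2) ∧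
      (1:ℝ)/(m+1) ≤ (p.2.2:ℝ) - (p.2.1:ℝ) ∧ (p.2.2:ℝ) - (p.2.1:ℝ) ≤ 1/(n+1)} := by
    refine IsClosed.inter (isClosed_eq hev1 (continuous_fst.comp continuous_snd)) ?_
    refine IsClosed.inter (isClosed_eq hev2 (continuous_snd.comp continuous_snd)) ?_
    refine IsClosed.inter (isClosed_le continuous_const hx) ?_
    refine IsClosed.inter (isClosed_le hx continuous_const) ?_
    refine IsClosed.inter (isClosed_le continuous_const hy) ?_
    refine IsClosed.inter (isClosed_le hy continuous_const) ?_
    exact IsClosed.inter (isClosed_le continuous_const (hy.sub hx))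
      (isClosed_le (hy.sub hx) continuous_const)
  have himg : IsClosed (Prod.fst '' {p : C(I, I) × (I × I) | p.1 p.2.1 = p.2.1 ∧
      p.1 p.2.2 = p.2.2 ∧
      (1:ℝ)/(k+2) ≤ (p.2.1:ℝ) ∧ (p.2.1:ℝ) ≤ 1 - 1/(k+2) ∧
      (1:ℝ)/(k+2) ≤ (p.2.2:ℝ) ∧ (p.2.2:ℝ) ≤ 1 - 1/(k+2) ∧
      (1:ℝ)/(m+1) ≤ (p.2.2:ℝ) - (p.2.1:ℝ) ∧ (p.2.2:ℝ) - (p.2.1:ℝ) ≤ 1/(n+1)}) :=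
    isClosedMap_fst_of_compactSpace _ hD
  have heq : Bknm k n m = ι ⁻¹' (Prod.fst '' {p : C(I, I) × (I × I) | p.1 p.2.1 = p.2.1 ∧
      p.1 p.2.2 = p.2.2 ∧
      (1:ℝ)/(k+2) ≤ (p.2.1:ℝ) ∧ (p.2.1:ℝ) ≤ 1 - 1/(k+2) ∧
      (1:ℝ)/(k+2) ≤ (p.2.2:ℝ) ∧ (p.2.2:ℝ) ≤ 1 - 1/(k+2) ∧
      (1:ℝ)/(m+1) ≤ (p.2.2:ℝ) - (p.2.1:ℝ) ∧ (p.2.2:ℝ) - (p.2.1:ℝ) ≤ 1/(n+1)}) := by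
    ext f
    constructor
    · rintro ⟨x, y, h⟩
      exact ⟨(ι f, (x, y)), h, rfl⟩
    · rintro ⟨⟨F, x, y⟩, hmem, hF⟩
      subst hF
      exact ⟨x, y, hmem⟩
  rw [heq]
  exact himg.preimage continuous_ι

lemma measurableSet_BB : MeasurableSet BB := by
  refine MeasurableSet.iUnion fun k => MeasurableSet.iInter fun n =>
    MeasurableSet.iUnion fun m => ?_
  exact (isClosed_Bknm k n m).measurableSet

lemma ι_mul (f g : HomeoPlusI) : ι (f * g) = (ι f).comp (ι g) := by
  ext x; rfl

lemma continuous_conj (g h : HomeoPlusI) : Continuous fun b : HomeoPlusI => g * b * h := by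
  apply continuous_into
  have : (fun b : HomeoPlusI => ι (g * b * h))
      = fun b => (ι g).comp ((ι b).comp (ι h)) := by
    funext b
    rw [ι_mul, ι_mul, ContinuousMap.comp_assoc]
  rw [this]
  exact (ContinuousMap.continuous_postcomp (ι g)).comp
    ((ContinuousMap.continuous_precomp (ι h)).comp continuous_ι)

lemma image_conj_eq (g h : HomeoPlusI) (S : Set HomeoPlusI) :
    (fun b => g * b * h) '' S = (fun b => g⁻¹ * b * h⁻¹) ⁻¹' S := by
  ext b
  constructor
  · rintro ⟨c, hc, rfl⟩
    have : g⁻¹ * (g * c * h) * h⁻¹ = c := by group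
    simpa [Set.mem_preimage, this]
  · intro hb
    refine ⟨g⁻¹ * b * h⁻¹, hb, ?_⟩
    group

lemma measurableSet_conj_BB (g h : HomeoPlusI) :
    MeasurableSet ((fun b => g * b * h) '' BB) := by
  rw [image_conj_eq]
  exact measurableSet_BB.preimage (continuous_conj g⁻¹ h⁻¹).measurable

end HP

namespace HP

lemma compl_subset_BB :
    {f : HomeoPlusI |
      ∀ x : I, (x : ℝ) ∈ Set.Ioo (0 : ℝ) 1 → ¬ AccPt x (Filter.principal (fixSet f))}ᶜ ⊆ BB := by
  intro f hf
  have hf' : ∃ x : I, (x : ℝ) ∈ Set.Ioo (0:ℝ) 1 ∧ AccPt x (Filter.principal (fixSet f)) := by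
    by_contra hcon
    push_neg at hcon
    exact hf fun x hx => hcon x hx
  obtain ⟨x, hx, hacc⟩ := hf'
  have haccn := accPt_iff_nhds.1 hacc
  have hxf : (f : I ≃ₜ I) x = x := by
    have hxcl : x ∈ closure (fixSet f) := by
      rw [mem_closure_iff_nhds]
      intro U hU
      obtain ⟨y, hy, -⟩ := haccn U hU
      exact ⟨y, hy⟩
    rwa [(isClosed_fixSet f).closure_eq] at hxcl
  set δ : ℝ := min (x:ℝ) (1 - (x:ℝ)) with hδdef
  have hδpos : 0 < δ := lt_min hx.1 (by linarith [hx.2])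
  have hδx : δ ≤ (x:ℝ) := min_le_left _ _
  have hδx' : δ ≤ 1 - (x:ℝ) := min_le_right _ _
  obtain ⟨k, hk⟩ := exists_nat_gt (1/δ)
  have hkpos : (0:ℝ) < (k:ℝ) + 2 := by positivity
  have hkk : (1:ℝ)/((k:ℝ)+2) < δ := by
    rw [div_lt_iff₀ hkpos]
    have h1 : 1/δ < (k:ℝ) + 2 := by linarith
    rw [div_lt_iff₀ hδpos] at h1
    linarith
  set ε : ℝ := δ - 1/((k:ℝ)+2) with hεdef
  have hεpos : 0 < ε := by simp only [hεdef]; linarith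
  refine Set.mem_iUnion.2 ⟨k, Set.mem_iInter.2 fun n => ?_⟩
  have hnpos : (0:ℝ) < min ε (1/((n:ℝ)+1)) := lt_min hεpos (by positivity)
  obtain ⟨y, hy, hyne⟩ := haccn (Metric.ball x (min ε (1/((n:ℝ)+1))))
    (Metric.ball_mem_nhds _ hnpos)
  have hdist : |(y:ℝ) - (x:ℝ)| < min ε (1/((n:ℝ)+1)) := by
    have := Metric.mem_ball.1 hy.1
    rwa [Subtype.dist_eq, Real.dist_eq] at this
  have hdε : |(y:ℝ) - (x:ℝ)| < ε := lt_of_lt_of_le hdist (min_le_left _ _)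
  have hdn : |(y:ℝ) - (x:ℝ)| < 1/((n:ℝ)+1) := lt_of_lt_of_le hdist (min_le_right _ _)
  have habs1 : (y:ℝ) - (x:ℝ) < ε := (abs_lt.1 hdε).2
  have habs2 : -ε < (y:ℝ) - (x:ℝ) := (abs_lt.1 hdε).1
  have hyf : (f : I ≃ₜ I) y = y := hy.2
  have hyne' : (y:ℝ) ≠ (x:ℝ) := fun hc => hyne (Subtype.coe_injective hc)
  have hxband1 : (1:ℝ)/((k:ℝ)+2) ≤ (x:ℝ) := by linarith
  have hxband2 : (x:ℝ) ≤ 1 - 1/((k:ℝ)+2) := by linarith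
  have hyband1 : (1:ℝ)/((k:ℝ)+2) ≤ (y:ℝ) := by simp only [hεdef] at habs2; linarith
  have hyband2 : (y:ℝ) ≤ 1 - 1/((k:ℝ)+2) := by simp only [hεdef] at habs1; linarith
  rcases lt_or_gt_of_ne hyne' with hlt | hgt
  · -- y < x : pair (y, x)
    have hgap : (0:ℝ) < (x:ℝ) - (y:ℝ) := by linarith
    obtain ⟨m, hm⟩ := exists_nat_gt (1/((x:ℝ) - (y:ℝ)))
    have hmm : (1:ℝ)/((m:ℝ)+1) ≤ (x:ℝ) - (y:ℝ) := by
      rw [div_le_iff₀ (by positivity)]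
      have h1 : 1/((x:ℝ) - (y:ℝ)) < (m:ℝ) + 1 := by linarith
      rw [div_lt_iff₀ hgap] at h1
      linarith
    refine Set.mem_iUnion.2 ⟨m, y, x, hyf, hxf, hyband1, hyband2, hxband1, hxband2, hmm, ?_⟩
    have := abs_lt.1 hdn
    linarith [this.1]
  · have hgap : (0:ℝ) < (y:ℝ) - (x:ℝ) := by linarith
    obtain ⟨m, hm⟩ := exists_nat_gt (1/((y:ℝ) - (x:ℝ)))
    have hmm : (1:ℝ)/((m:ℝ)+1) ≤ (y:ℝ) - (x:ℝ) := by
      rw [div_le_iff₀ (by positivity)]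
      have h1 : 1/((y:ℝ) - (x:ℝ)) < (m:ℝ) + 1 := by linarith
      rw [div_lt_iff₀ hgap] at h1
      linarith
    refine Set.mem_iUnion.2 ⟨m, x, y, hxf, hyf, hxband1, hxband2, hyband1, hyband2, hmm, ?_⟩
    have := abs_lt.1 hdn
    linarith [this.2]

end HP

namespace HP

open Real ENNReal

/-- The quotient function whose level sets describe coincidences of `t ^ b` with `Φ t`. -/
def psi (Φ : ℝ → ℝ) (t : ℝ) : ℝ := Real.log (Φ t) / Real.log t

set_option maxHeartbeats 1000000 in
/-- The key analytic lemma: for a.e. `a`, the level set `{ψ = 1 + a}` in a compact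
subinterval of `(0,1)` is finite. -/
lemma level_null (p q : ℝ) (Φ : ℝ → ℝ) (hp : 0 < p) (hq : q < 1)
    (hΦmono : MonotoneOn Φ (Set.Icc p q))
    (hΦpos : ∀ t ∈ Set.Icc p q, 0 < Φ t) (hΦlt : ∀ t ∈ Set.Icc p q, Φ t < 1) :
    volume {a : ℝ | {t ∈ Set.Icc p q | psi Φ t = 1 + a}.Infinite} = 0 := by
  by_cases hpq : p ≤ q
  swap
  · have : {a : ℝ | {t ∈ Set.Icc p q | psi Φ t = 1 + a}.Infinite} = ∅ := by
      ext a
      simp only [Set.mem_setOf_eq, Set.mem_empty_iff_false, iff_false]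
      rw [Set.Icc_eq_empty hpq]
      intro hinf
      exact hinf (Set.finite_empty.subset (Set.sep_subset _ _))
    rw [this, measure_empty]
  -- basic constants
  have hq0 : 0 < q := lt_of_lt_of_le hp hpq
  have hp1 : p < 1 := lt_of_le_of_lt hpq hq
  set h : ℝ → ℝ := fun t => Real.log (Φ t) with hh
  set u : ℝ → ℝ := fun t => Real.log t with hu
  set m₀ : ℝ := -Real.log q with hm₀
  set L₀ : ℝ := -Real.log p with hL₀
  set M₀ : ℝ := -Real.log (Φ p) with hM₀
  have hm₀pos : 0 < m₀ := neg_pos.2 (Real.log_neg hq0 hq)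
  have hL₀pos : 0 < L₀ := neg_pos.2 (Real.log_neg hp hp1)
  have hpm : p ∈ Set.Icc p q := ⟨le_refl p, hpq⟩
  have hqm : q ∈ Set.Icc p q := ⟨hpq, le_refl q⟩
  have hM₀pos : 0 < M₀ := neg_pos.2 (Real.log_neg (hΦpos p hpm) (hΦlt p hpm))
  set C₁ : ℝ := L₀ / m₀^2 with hC₁
  set C₂ : ℝ := M₀ / m₀^2 with hC₂
  have hC₁pos : 0 < C₁ := by positivity
  have hC₂pos : 0 < C₂ := by positivity
  -- bounds used repeatedly
  have hmem_pos : ∀ t ∈ Set.Icc p q, 0 < t := fun t ht => lt_of_lt_of_le hp ht.1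
  have hmem_lt1 : ∀ t ∈ Set.Icc p q, t < 1 := fun t ht => lt_of_le_of_lt ht.2 hq
  have hu_neg : ∀ t ∈ Set.Icc p q, u t < 0 := fun t ht =>
    Real.log_neg (hmem_pos t ht) (hmem_lt1 t ht)
  have hu_le : ∀ t ∈ Set.Icc p q, u t ≤ -m₀ := by
    intro t ht
    rw [hm₀, neg_neg, hu]
    exact (Real.log_le_log_iff (hmem_pos t ht) hq0).2 ht.2
  have hu_ge : ∀ t ∈ Set.Icc p q, -L₀ ≤ u t := by
    intro t ht
    rw [hL₀, neg_neg, hu]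
    exact (Real.log_le_log_iff hp (hmem_pos t ht)).2 ht.1
  have humono : MonotoneOn u (Set.Icc p q) := by
    intro s hs t ht hst
    exact (Real.log_le_log_iff (hmem_pos s hs) (hmem_pos t ht)).2 hst
  have hhmono : MonotoneOn h (Set.Icc p q) := by
    intro s hs t ht hst
    exact (Real.log_le_log_iff (hΦpos s hs) (hΦpos t ht)).2 (hΦmono hs ht hst)
  have hh_nonpos : ∀ t ∈ Set.Icc p q, h t ≤ 0 := fun t ht =>
    Real.log_nonpos (hΦpos t ht).le (hΦlt t ht).le
  have hh_ge : ∀ t ∈ Set.Icc p q, -M₀ ≤ h t := by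
    intro t ht
    rw [hM₀, neg_neg]
    exact (Real.log_le_log_iff (hΦpos p hpm) (hΦpos t ht)).2 (hΦmono hpm ht ht.1)
  -- the oscillation bound
  have osc : ∀ s ∈ Set.Icc p q, ∀ t ∈ Set.Icc p q, s ≤ t →
      |psi Φ s - psi Φ t| ≤ C₁ * (h t - h s) + C₂ * (u t - u s) := by
    intro s hs t ht hst
    have hus := hu_neg s hs
    have hut := hu_neg t ht
    have hexp : psi Φ s - psi Φ t = (h s * u t - h t * u s) / (u s * u t) := by
      show h s / u s - h t / u t = _
      rw [div_sub_div _ _ (ne_of_lt hus) (ne_of_lt hut)]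
      ring_nf
    rw [hexp, abs_div, abs_of_pos (mul_pos_of_neg_of_neg hus hut)]
    have hnum : |h s * u t - h t * u s| ≤ M₀ * (u t - u s) + L₀ * (h t - h s) := by
      have hrw : h s * u t - h t * u s = h s * (u t - u s) + u s * (h s - h t) := by ring
      rw [hrw]
      refine (abs_add_le _ _).trans ?_
      rw [abs_mul, abs_mul]
      have h1 : |h s| ≤ M₀ := by
        rw [abs_le]
        exact ⟨hh_ge s hs, le_trans (hh_nonpos s hs) hM₀pos.le⟩
      have h2 : |u t - u s| = u t - u s := abs_of_nonneg (by linarith [humono hs ht hst])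
      have h3 : |u s| ≤ L₀ := by
        rw [abs_le]
        exact ⟨hu_ge s hs, le_trans hus.le hL₀pos.le⟩
      have h4 : |h s - h t| = h t - h s := by
        rw [abs_sub_comm]
        exact abs_of_nonneg (by linarith [hhmono hs ht hst])
      rw [h2, h4]
      have e1 : |h s| * (u t - u s) ≤ M₀ * (u t - u s) := by
        apply mul_le_mul_of_nonneg_right h1
        linarith [humono hs ht hst]
      have e2 : |u s| * (h t - h s) ≤ L₀ * (h t - h s) := by
        apply mul_le_mul_of_nonneg_right h3
        linarith [hhmono hs ht hst]
      linarith
    have hden : m₀^2 ≤ u s * u t := by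
      have e1 : m₀ ≤ -u s := by linarith [hu_le s hs]
      have e2 : m₀ ≤ -u t := by linarith [hu_le t ht]
      have : m₀ * m₀ ≤ (-u s) * (-u t) :=
        mul_le_mul e1 e2 hm₀pos.le (by linarith)
      nlinarith
    calc |h s * u t - h t * u s| / (u s * u t)
        ≤ (M₀ * (u t - u s) + L₀ * (h t - h s)) / m₀^2 := by
          have e1 : 0 ≤ h t - h s := by linarith [hhmono hs ht hst]
          have e2 : 0 ≤ u t - u s := by linarith [humono hs ht hst]
          exact div_le_div₀ (add_nonneg (mul_nonneg hM₀pos.le e2) (mul_nonneg hL₀pos.le e1))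
            hnum (by positivity) hden
      _ = C₁ * (h t - h s) + C₂ * (u t - u s) := by
          rw [hC₁, hC₂]; ring
  -- partition data
  set VV : ℝ := 2 * (C₁ * (h q - h p) + C₂ * (u q - u p)) with hVV
  have hVVnonneg : 0 ≤ VV := by
    have := hhmono hpm hqm hpq
    have := humono hpm hqm hpq
    rw [hVV]
    have e1 : 0 ≤ h q - h p := by linarith [hhmono hpm hqm hpq]
    have e2 : 0 ≤ u q - u p := by linarith [humono hpm hqm hpq]
    positivity
  set δ : ℕ → ℝ := fun n => (q - p)/(n + 1) with hδ
  have hδnonneg : ∀ n, 0 ≤ δ n := fun n => by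
    rw [hδ]
    exact div_nonneg (by linarith) (by positivity)
  set tt : ℕ → ℕ → ℝ := fun n i => p + i * δ n with htt
  have htt0 : ∀ n, tt n 0 = p := fun n => by simp [htt]
  have httlast : ∀ n, tt n (n + 1) = q := by
    intro n
    rw [htt, hδ]
    field_simp
    push_cast; ring
  have httmono : ∀ n, ∀ i j : ℕ, i ≤ j → tt n i ≤ tt n j := by
    intro n i j hij
    rw [htt]
    simp only
    have h1 : (i:ℝ) ≤ (j:ℝ) := Nat.cast_le.2 hij
    have h2 := mul_le_mul_of_nonneg_right h1 (hδnonneg n)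
    linarith
  have httmem : ∀ n, ∀ i : ℕ, i ≤ n + 1 → tt n i ∈ Set.Icc p q := by
    intro n i hi
    constructor
    · rw [htt]
      simp only
      have h2 := mul_nonneg (Nat.cast_nonneg (α := ℝ) i) (hδnonneg n)
      linarith
    · rw [← httlast n]
      exact httmono n i (n+1) hi
  set w : ℕ → ℕ → ℝ := fun n i =>
    C₁ * (h (tt n (i+1)) - h (tt n i)) + C₂ * (u (tt n (i+1)) - u (tt n i)) with hw
  have hwnonneg : ∀ n, ∀ i : ℕ, i ≤ n → 0 ≤ w n i := by
    intro n i hi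
    have h1 := httmem n i (le_trans hi (Nat.le_succ n))
    have h2 := httmem n (i+1) (Nat.succ_le_succ hi)
    have h3 := httmono n i (i+1) (Nat.le_succ i)
    have e1 : 0 ≤ h (tt n (i+1)) - h (tt n i) := by linarith [hhmono h1 h2 h3]
    have e2 : 0 ≤ u (tt n (i+1)) - u (tt n i) := by linarith [humono h1 h2 h3]
    rw [hw]
    positivity
  set W : ℕ → ℕ → Set ℝ := fun n i =>
    Set.Icc (psi Φ (tt n i) - w n i) (psi Φ (tt n i) + w n i) with hW
  have hWmeas : ∀ n i, MeasurableSet (W n i) := by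
    intro n i
    rw [hW]
    exact measurableSet_Icc
  set N : ℕ → ℝ → ℝ≥0∞ := fun n b =>
    ∑ i ∈ Finset.range (n+1), (W n i).indicator 1 b with hN
  have hNmeas : ∀ n, Measurable (N n) := by
    intro n
    rw [hN]
    apply Finset.measurable_sum
    intro i _
    exact measurable_one.indicator (hWmeas n i)
  have hNint : ∀ n, ∫⁻ b, N n b ≤ ENNReal.ofReal VV := by
    intro n
    rw [hN]
    simp only
    rw [MeasureTheory.lintegral_finset_sum _
      (fun i _ => measurable_one.indicator (hWmeas n i))]
    have hterm : ∀ i ∈ Finset.range (n+1),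
        (∫⁻ b, (W n i).indicator 1 b) = ENNReal.ofReal (2 * w n i) := by
      intro i hi
      rw [MeasureTheory.lintegral_indicator_one (hWmeas n i), hW]
      simp only
      rw [Real.volume_Icc]
      congr 1
      ring
    rw [Finset.sum_congr rfl hterm, ← ENNReal.ofReal_sum_of_nonneg
      (fun i hi => by
        have := hwnonneg n i (Nat.lt_succ_iff.1 (Finset.mem_range.1 hi))
        positivity)]
    apply ENNReal.ofReal_le_ofReal
    have hsum : ∑ i ∈ Finset.range (n+1), 2 * w n i
        = 2 * (C₁ * (h q - h p) + C₂ * (u q - u p)) := by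
      have e1 : ∀ i ∈ Finset.range (n+1), 2 * w n i =
          (2*C₁) * (h (tt n (i+1)) - h (tt n i)) + (2*C₂) * (u (tt n (i+1)) - u (tt n i)) := by
        intro i _
        rw [hw]; ring
      rw [Finset.sum_congr rfl e1, Finset.sum_add_distrib, ← Finset.mul_sum, ← Finset.mul_sum,
        Finset.sum_range_sub (fun i => h (tt n i)), Finset.sum_range_sub (fun i => u (tt n i)),
        htt0, httlast]
      ring
    rw [hsum, hVV]
  -- Markov sets
  set S : ℕ → ℕ → Set ℝ := fun n K => {b | (K : ℝ≥0∞) ≤ N n b} with hS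
  have hSbound : ∀ n K : ℕ, (K : ℝ≥0∞) * volume (S n K) ≤ ENNReal.ofReal VV := by
    intro n K
    refine le_trans ?_ (hNint n)
    have := MeasureTheory.mul_meas_ge_le_lintegral₀ (μ := volume) (hNmeas n).aemeasurable
      (K : ℝ≥0∞)
    exact this
  -- the enveloping null set
  set T : ℕ → Set ℝ := fun K => ⋃ n₀ : ℕ, ⋂ n : ℕ, ⋂ (_ : n₀ ≤ n),
    (fun a : ℝ => 1 + a) ⁻¹' S n K with hT
  have hTbound : ∀ K : ℕ, (K : ℝ≥0∞) * volume (T K) ≤ ENNReal.ofReal VV := by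
    intro K
    have hmono : Monotone (fun n₀ : ℕ => ⋂ n : ℕ, ⋂ (_ : n₀ ≤ n),
        (fun a : ℝ => 1 + a) ⁻¹' S n K) := by
      intro a b hab
      apply Set.iInter_mono fun n => ?_
      exact Set.iInter_mono' fun hbn => ⟨le_trans hab hbn, subset_rfl⟩
    rw [hT]
    simp only
    rw [hmono.measure_iUnion, ENNReal.mul_iSup]
    refine iSup_le fun n₀ => ?_
    have hsub : (⋂ n : ℕ, ⋂ (_ : n₀ ≤ n), (fun a : ℝ => 1 + a) ⁻¹' S n K)
        ⊆ (fun a : ℝ => 1 + a) ⁻¹' S n₀ K := by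
      intro b hb
      simp only [Set.mem_iInter] at hb
      exact hb n₀ (le_refl n₀)
    calc (K : ℝ≥0∞) * volume (⋂ n : ℕ, ⋂ (_ : n₀ ≤ n), (fun a : ℝ => 1 + a) ⁻¹' S n K)
        ≤ (K : ℝ≥0∞) * volume ((fun a : ℝ => 1 + a) ⁻¹' S n₀ K) :=
          mul_le_mul_right (measure_mono hsub) _
      _ = (K : ℝ≥0∞) * volume (S n₀ K) := by rw [measure_preimage_add]
      _ ≤ ENNReal.ofReal VV := hSbound n₀ K
  -- the inclusion
  have hincl : ∀ K : ℕ,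
      {a : ℝ | {t ∈ Set.Icc p q | psi Φ t = 1 + a}.Infinite} ⊆ T K := by
    intro K a ha
    simp only [Set.mem_setOf_eq] at ha
    have hpq' : p < q := by
      rcases lt_or_eq_of_le hpq with h' | h'
      · exact h'
      · exfalso
        subst h'
        apply ha
        apply Set.Finite.subset (Set.finite_singleton p)
        intro t ht
        rw [Set.Icc_self] at ht
        exact ht.1
    obtain ⟨T', hT'sub, hT'card⟩ := ha.exists_subset_card_eq K
    have key : ∃ γ : ℝ, 0 < γ ∧ ∀ x ∈ T', ∀ y ∈ T', x < y → γ ≤ y - x := by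
      set P := (T' ×ˢ T').filter (fun r => r.1 < r.2) with hP
      by_cases hPne : P.Nonempty
      · refine ⟨P.inf' hPne (fun r => r.2 - r.1), ?_, ?_⟩
        · rw [Finset.lt_inf'_iff]
          rintro ⟨x, y⟩ hr
          rw [hP, Finset.mem_filter] at hr
          simpa using sub_pos.2 hr.2
        · intro x hx y hy hxy
          have hmem : (x, y) ∈ P := by
            rw [hP, Finset.mem_filter]
            exact ⟨Finset.mem_product.2 ⟨hx, hy⟩, hxy⟩
          exact Finset.inf'_le (fun r => r.2 - r.1) hmem
      · refine ⟨1, one_pos, ?_⟩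
        intro x hx y hy hxy
        exact absurd ⟨(x, y), by
          rw [hP, Finset.mem_filter]
          exact ⟨Finset.mem_product.2 ⟨hx, hy⟩, hxy⟩⟩ hPne
    obtain ⟨γ, hγpos, hγle⟩ := key
    obtain ⟨n₀, hn₀⟩ := exists_nat_gt ((q - p)/γ)
    refine Set.mem_iUnion.2 ⟨n₀, Set.mem_iInter.2 fun n => Set.mem_iInter.2 fun hn => ?_⟩
    show (K : ℝ≥0∞) ≤ N n (1 + a)
    have hδpos : 0 < δ n := div_pos (by linarith) (by positivity)
    have hmesh : δ n < γ := by
      rw [hδ]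
      rw [div_lt_iff₀ (by positivity)]
      rw [div_lt_iff₀ hγpos] at hn₀
      have h1 : (n₀:ℝ) ≤ (n:ℝ) := Nat.cast_le.2 hn
      nlinarith
    set idx : ℝ → ℕ := fun s => min n ⌊(s - p)/δ n⌋₊ with hidx
    have hidx_le : ∀ s, idx s ≤ n := fun s => min_le_left _ _
    have hbound : ∀ s ∈ Set.Icc p q, tt n (idx s) ≤ s ∧ s ≤ tt n (idx s + 1) := by
      intro s hs
      have hsp : 0 ≤ (s - p)/δ n := div_nonneg (by linarith [hs.1]) hδpos.le
      by_cases hc : ⌊(s - p)/δ n⌋₊ ≤ n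
      · have hidxeq : idx s = ⌊(s - p)/δ n⌋₊ := min_eq_right hc
        constructor
        · rw [hidxeq, htt]
          simp only
          have h1 := Nat.floor_le hsp
          have h2 := (le_div_iff₀ hδpos).1 h1
          linarith
        · rw [hidxeq, htt]
          simp only
          have h1 := Nat.lt_floor_add_one ((s - p)/δ n)
          rw [div_lt_iff₀ hδpos] at h1
          push_cast
          linarith
      · push_neg at hc
        have hidxeq : idx s = n := min_eq_left (le_of_lt hc)
        have h2 : ((n:ℝ) + 1) ≤ (s - p)/δ n := by
          have h3 : (n + 1 : ℕ) ≤ ⌊(s - p)/δ n⌋₊ := hc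
          have h4 := (Nat.le_floor_iff hsp).1 h3
          push_cast at h4
          linarith
        rw [le_div_iff₀ hδpos] at h2
        constructor
        · rw [hidxeq, htt]
          simp only
          have h5 : (n:ℝ) * δ n ≤ ((n:ℝ) + 1) * δ n :=
            mul_le_mul_of_nonneg_right (by linarith) hδpos.le
          linarith
        · rw [hidxeq, httlast n]
          exact hs.2
    have hlen : ∀ i : ℕ, tt n (i + 1) - tt n i = δ n := by
      intro i
      rw [htt]
      push_cast
      ring
    have hinj : Set.InjOn idx ↑T' := by
      intro s hsm s' hs'm heq
      by_contra hne
      have hsIcc : s ∈ Set.Icc p q := (hT'sub hsm).1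
      have hs'Icc : s' ∈ Set.Icc p q := (hT'sub hs'm).1
      have hb1 := hbound s hsIcc
      have hb2 := hbound s' hs'Icc
      rcases lt_or_gt_of_ne hne with hlt | hgt
      · have hg := hγle s hsm s' hs'm hlt
        have h5 : s' ≤ tt n (idx s + 1) := by rw [heq]; exact hb2.2
        have h6 := hlen (idx s)
        linarith [hb1.1, hmesh]
      · have hg := hγle s' hs'm s hsm hgt
        have h5 : s ≤ tt n (idx s' + 1) := by rw [← heq]; exact hb1.2
        have h6 := hlen (idx s')
        linarith [hb2.1, hmesh]
    have hmemW : ∀ s ∈ (T' : Finset ℝ), (1 + a) ∈ W n (idx s) := by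
      intro s hsm
      have hsIcc : s ∈ Set.Icc p q := (hT'sub hsm).1
      have hpsi : psi Φ s = 1 + a := (hT'sub hsm).2
      have htti : tt n (idx s) ∈ Set.Icc p q :=
        httmem n _ (le_trans (hidx_le s) (Nat.le_succ n))
      have htti1 : tt n (idx s + 1) ∈ Set.Icc p q :=
        httmem n _ (Nat.succ_le_succ (hidx_le s))
      have hb := hbound s hsIcc
      have hosc := osc (tt n (idx s)) htti s hsIcc hb.1
      have hhb : h s ≤ h (tt n (idx s + 1)) := hhmono hsIcc htti1 hb.2
      have hub : u s ≤ u (tt n (idx s + 1)) := humono hsIcc htti1 hb.2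
      have hle : |psi Φ (tt n (idx s)) - psi Φ s| ≤ w n (idx s) := by
        refine hosc.trans ?_
        rw [hw]
        simp only
        have e1 : C₁ * (h s - h (tt n (idx s))) ≤
            C₁ * (h (tt n (idx s + 1)) - h (tt n (idx s))) :=
          mul_le_mul_of_nonneg_left (by linarith) hC₁pos.le
        have e2 : C₂ * (u s - u (tt n (idx s))) ≤
            C₂ * (u (tt n (idx s + 1)) - u (tt n (idx s))) :=
          mul_le_mul_of_nonneg_left (by linarith) hC₂pos.le
        linarith
      rw [hW]
      simp only
      rw [Set.mem_Icc]
      have h7 := (abs_le.1 hle).1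
      have h8 := (abs_le.1 hle).2
      constructor <;> linarith
    calc (K : ℝ≥0∞) = ((T'.image idx).card : ℝ≥0∞) := by
          rw [Finset.card_image_of_injOn hinj, hT'card]
      _ = ∑ i ∈ T'.image idx, (W n i).indicator 1 (1 + a) := by
          rw [Finset.sum_congr rfl (fun i hi => ?_), Finset.sum_const, nsmul_eq_mul, mul_one]
          obtain ⟨s, hs, rfl⟩ := Finset.mem_image.1 hi
          exact Set.indicator_of_mem (hmemW s hs) 1
      _ ≤ ∑ i ∈ Finset.range (n+1), (W n i).indicator 1 (1 + a) := by
          refine Finset.sum_le_sum_of_subset fun i hi => ?_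
          obtain ⟨s, hs, rfl⟩ := Finset.mem_image.1 hi
          exact Finset.mem_range.2 (Nat.lt_succ_of_le (hidx_le s))
      _ = N n (1 + a) := rfl
  -- conclusion
  have hfinal : ∀ K : ℕ, (K : ℝ≥0∞) *
      volume {a : ℝ | {t ∈ Set.Icc p q | psi Φ t = 1 + a}.Infinite} ≤ ENNReal.ofReal VV :=
    fun K => le_trans (mul_le_mul_right (measure_mono (hincl K)) _) (hTbound K)
  by_contra h0
  have hdivtop : ENNReal.ofReal VV / volume {a : ℝ |
      {t ∈ Set.Icc p q | psi Φ t = 1 + a}.Infinite} ≠ ⊤ :=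
    (ENNReal.div_lt_top ENNReal.ofReal_ne_top h0).ne
  obtain ⟨K, hK⟩ := ENNReal.exists_nat_gt hdivtop
  have hle2 : (K : ℝ≥0∞) ≤ ENNReal.ofReal VV / volume {a : ℝ |
      {t ∈ Set.Icc p q | psi Φ t = 1 + a}.Infinite} :=
    (ENNReal.le_div_iff_mul_le (Or.inl h0) (Or.inr ENNReal.ofReal_ne_top)).2 (hfinal K)
  exact absurd hle2 (not_le.2 hK)

end HP

namespace HP

open Real

lemma val_pos_of_ne_zero {z : I} (hz : z ≠ 0) : 0 < (z:ℝ) :=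
  lt_of_le_of_ne z.2.1 (fun hc => hz (Subtype.ext hc.symm))

lemma val_lt_one_of_ne_one {z : I} (hz : z ≠ 1) : (z:ℝ) < 1 :=
  lt_of_le_of_ne z.2.2 (fun hc => hz (Subtype.ext hc))

set_option maxHeartbeats 1000000 in
lemma bad_null (g h : HomeoPlusI) (k : ℕ) :
    volume {a : ℝ | a ∈ Set.Ioo (0:ℝ) 1 ∧
      g⁻¹ * FF a * h⁻¹ ∈ ⋂ n : ℕ, ⋃ m : ℕ, Bknm k n m} = 0 := by
  classical
  set φ : HomeoPlusI := g * h with hφ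
  set J : Set I := {x : I | (1:ℝ)/(k+2) ≤ (x:ℝ) ∧ (x:ℝ) ≤ 1 - 1/(k+2)} with hJ
  have hJclosed : IsClosed J := by
    have : J = (fun x : I => (x:ℝ)) ⁻¹' (Set.Icc (1/(k+2)) (1 - 1/(k+2))) := by
      ext x; simp [hJ, Set.mem_Icc]
    rw [this]
    exact isClosed_Icc.preimage continuous_subtype_val
  have hk2 : (0:ℝ) < (k:ℝ) + 2 := by positivity
  have hkhalf : (1:ℝ)/((k:ℝ)+2) ≤ 1/2 := by
    apply one_div_le_one_div_of_le two_pos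
    have := Nat.cast_nonneg (α := ℝ) k
    linarith
  have hhalfI : (1/2 : ℝ) ∈ Set.Icc (0:ℝ) 1 := by norm_num
  have hJne : J.Nonempty := by
    refine ⟨⟨1/2, hhalfI⟩, ?_, ?_⟩
    · exact hkhalf
    · simp only
      linarith
  set hmap : I → ℝ := fun x => ((((h⁻¹ : HomeoPlusI) : I ≃ₜ I) x : I) : ℝ) with hhmap
  have hhmapcont : Continuous hmap :=
    continuous_subtype_val.comp ((h⁻¹ : HomeoPlusI) : I ≃ₜ I).continuous
  set K' : Set ℝ := hmap '' J with hK'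
  have hK'comp : IsCompact K' := (hJclosed.isCompact).image hhmapcont
  have hK'ne : K'.Nonempty := hJne.image hmap
  have hK'sub : ∀ t ∈ K', 0 < t ∧ t < 1 := by
    rintro t ⟨x, hxJ, rfl⟩
    have hx0 : x ≠ 0 := by
      intro h0
      rw [h0] at hxJ
      have : (1:ℝ)/((k:ℝ)+2) ≤ 0 := hxJ.1
      have : (0:ℝ) < 1/((k:ℝ)+2) := by positivity
      linarith
    have hx1 : x ≠ 1 := by
      intro h1
      rw [h1] at hxJ
      have : (1:ℝ) ≤ 1 - 1/((k:ℝ)+2) := hxJ.2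
      have : (0:ℝ) < 1/((k:ℝ)+2) := by positivity
      linarith
    have hy0 : ((h⁻¹ : HomeoPlusI) : I ≃ₜ I) x ≠ 0 := ne_zero hx0
    have hy1 : ((h⁻¹ : HomeoPlusI) : I ≃ₜ I) x ≠ 1 := ne_one hx1
    exact ⟨val_pos_of_ne_zero hy0, val_lt_one_of_ne_one hy1⟩
  set pp : ℝ := sInf K' with hpp
  set qq : ℝ := sSup K' with hqq
  have hppmem : pp ∈ K' := hK'comp.sInf_mem hK'ne
  have hqqmem : qq ∈ K' := hK'comp.sSup_mem hK'ne
  have hpp0 : 0 < pp := (hK'sub pp hppmem).1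
  have hqq1 : qq < 1 := (hK'sub qq hqqmem).2
  have hbdd : BddAbove K' := hK'comp.bddAbove
  have hbddb : BddBelow K' := hK'comp.bddBelow
  have hIccK : ∀ t ∈ K', t ∈ Set.Icc pp qq :=
    fun t ht => ⟨csInf_le hbddb ht, le_csSup hbdd ht⟩
  set Φ : ℝ → ℝ := fun t => (((φ : I ≃ₜ I) (Set.projIcc 0 1 zero_le_one t) : I) : ℝ) with hΦ
  have hΦmono : MonotoneOn Φ (Set.Icc pp qq) := by
    intro s _ t _ hst
    exact Subtype.coe_le_coe.2 (mono φ (Set.monotone_projIcc zero_le_one hst))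
  have hmemI : ∀ t ∈ Set.Icc pp qq, t ∈ Set.Icc (0:ℝ) 1 := by
    intro t ht
    constructor
    · linarith [ht.1]
    · linarith [ht.2]
  have hΦval : ∀ t ∈ Set.Icc pp qq, 0 < Φ t ∧ Φ t < 1 := by
    intro t ht
    have ht0 : 0 < t := lt_of_lt_of_le hpp0 ht.1
    have ht1 : t < 1 := lt_of_le_of_lt ht.2 hqq1
    have hproj : Set.projIcc 0 1 zero_le_one t = ⟨t, hmemI t ht⟩ :=
      Set.projIcc_of_mem zero_le_one (hmemI t ht)
    have htne0 : (⟨t, hmemI t ht⟩ : I) ≠ 0 := by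
      intro hc
      have : t = (0:ℝ) := congrArg Subtype.val hc
      linarith
    have htne1 : (⟨t, hmemI t ht⟩ : I) ≠ 1 := by
      intro hc
      have : t = (1:ℝ) := congrArg Subtype.val hc
      linarith
    have h0 : (φ : I ≃ₜ I) (⟨t, hmemI t ht⟩ : I) ≠ 0 := ne_zero htne0
    have h1 : (φ : I ≃ₜ I) (⟨t, hmemI t ht⟩ : I) ≠ 1 := ne_one htne1
    rw [hΦ]
    simp only [hproj]
    exact ⟨val_pos_of_ne_zero h0, val_lt_one_of_ne_one h1⟩
  refine measure_mono_null ?_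
    (level_null pp qq Φ hpp0 hqq1 hΦmono (fun t ht => (hΦval t ht).1) (fun t ht => (hΦval t ht).2))
  rintro a ⟨haIoo, hc⟩
  simp only [Set.mem_setOf_eq]
  -- Step 1 : the fixed point set of c in the band J is infinite
  set c : HomeoPlusI := g⁻¹ * FF a * h⁻¹ with hcdef
  set Zc : Set I := {x : I | (c : I ≃ₜ I) x = x ∧ x ∈ J} with hZc
  have hZcinf : Zc.Infinite := by
    by_contra hfin
    rw [Set.not_infinite] at hfin
    set F : Finset I := hfin.toFinset with hF
    set G : Finset ℝ :=
      ((F ×ˢ F).filter (fun r => ((r.1 : I) : ℝ) < ((r.2 : I) : ℝ))).image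
        (fun r => ((r.2 : I) : ℝ) - ((r.1 : I) : ℝ)) with hG
    have hpair : ∀ n : ℕ, ∃ x y : I, x ∈ Zc ∧ y ∈ Zc ∧
        (0:ℝ) < (y:ℝ) - (x:ℝ) ∧ (y:ℝ) - (x:ℝ) ≤ 1/(n+1) := by
      intro n
      have := Set.mem_iInter.1 hc n
      obtain ⟨m, x, y, hfx, hfy, hxb1, hxb2, hyb1, hyb2, hgap1, hgap2⟩ := Set.mem_iUnion.1 this
      refine ⟨x, y, ⟨hfx, hxb1, hxb2⟩, ⟨hfy, hyb1, hyb2⟩, ?_, hgap2⟩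
      have : (0:ℝ) < 1/((m:ℝ)+1) := by positivity
      linarith
    have hGne : G.Nonempty := by
      obtain ⟨x, y, hx, hy, hgap, -⟩ := hpair 0
      refine ⟨(y:ℝ) - (x:ℝ), Finset.mem_image.2 ⟨(x, y), ?_, rfl⟩⟩
      rw [Finset.mem_filter]
      refine ⟨Finset.mem_product.2 ⟨?_, ?_⟩, by linarith⟩
      · exact hfin.mem_toFinset.2 hx
      · exact hfin.mem_toFinset.2 hy
    set γ : ℝ := G.min' hGne with hγ
    have hγpos : 0 < γ := by
      rw [hγ]
      rw [Finset.lt_min'_iff]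
      intro b hb
      obtain ⟨r, hr, rfl⟩ := Finset.mem_image.1 hb
      rw [Finset.mem_filter] at hr
      linarith [hr.2]
    obtain ⟨n, hn⟩ := exists_nat_gt (1/γ)
    have hnγ : (1:ℝ)/((n:ℝ)+1) < γ := by
      rw [div_lt_iff₀ (by positivity)]
      rw [div_lt_iff₀ hγpos] at hn
      nlinarith
    obtain ⟨x, y, hx, hy, hgap, hgap2⟩ := hpair n
    have hmemG : (y:ℝ) - (x:ℝ) ∈ G := by
      refine Finset.mem_image.2 ⟨(x, y), ?_, rfl⟩
      rw [Finset.mem_filter]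
      exact ⟨Finset.mem_product.2 ⟨hfin.mem_toFinset.2 hx, hfin.mem_toFinset.2 hy⟩, by linarith⟩
    have := Finset.min'_le G _ hmemG
    linarith
  -- Step 2 : transport to the level set of ψ
  have hinjOn : Set.InjOn hmap Zc := by
    intro x _ y _ hxy
    exact ((h⁻¹ : HomeoPlusI) : I ≃ₜ I).injective (Subtype.coe_injective hxy)
  have hRinf : (hmap '' Zc).Infinite := hZcinf.image hinjOn
  refine Set.Infinite.mono ?_ hRinf
  rintro t ⟨x, hxZc, rfl⟩
  have hxJ : x ∈ J := hxZc.2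
  have htK' : hmap x ∈ K' := ⟨x, hxJ, rfl⟩
  have htIcc : hmap x ∈ Set.Icc pp qq := hIccK _ htK'
  have ht01 := hK'sub _ htK'
  constructor
  · exact htIcc
  · -- the coincidence equation
    set y : I := ((h⁻¹ : HomeoPlusI) : I ≃ₜ I) x with hy
    have hcx : (c : I ≃ₜ I) x = x := hxZc.1
    have hcx' : ((g⁻¹ : HomeoPlusI) : I ≃ₜ I) (((FF a) : I ≃ₜ I) y) = x := by
      rw [← hcx]
      rfl
    have hFFy : ((FF a) : I ≃ₜ I) y = (g : I ≃ₜ I) x := by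
      have := congrArg (g : I ≃ₜ I) hcx'
      rw [inv_apply] at this
      rw [← this, Homeomorph.apply_symm_apply]
    have hφy : (φ : I ≃ₜ I) y = (g : I ≃ₜ I) x := by
      rw [hφ, mul_apply]
      congr 1
      rw [hy, inv_apply, Homeomorph.apply_symm_apply]
    have hval : ((y:ℝ)) ^ (ee a) = Φ (hmap x) := by
      have h1 : (((FF a) : I ≃ₜ I) y : ℝ) = (y:ℝ) ^ (ee a) := pI_apply (ee a) (ee_pos a) y
      have hproj : Set.projIcc 0 1 zero_le_one (hmap x) = y := by
        rw [hhmap]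
        exact Set.projIcc_val zero_le_one y
      rw [hΦ]
      simp only [hproj]
      rw [← h1, hFFy, hφy]
    have hlog : psi Φ (hmap x) = 1 + a := by
      have hmx : hmap x = (y:ℝ) := rfl
      rw [psi, ← hval, hmx]
      rw [Real.log_rpow ht01.1]
      rw [ee_of_mem haIoo]
      have hlogne : Real.log (y:ℝ) ≠ 0 := ne_of_lt (Real.log_neg ht01.1 ht01.2)
      field_simp
      rfl
    exact hlog

end HP

instance : IsProbabilityMeasure (volume.restrict (Set.Ioo (0:ℝ) 1)) := by
  constructor
  rw [Measure.restrict_apply_univ, Real.volume_Ioo]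
  norm_num

/-- The set of `f ∈ Homeo⁺([0,1])` whose fixed point set has no accumulation point in `(0,1)`
is co-Haar null. -/
theorem stmt_2 :
    IsHaarNull
      ({f : HomeoPlusI |
        ∀ x : I, (x : ℝ) ∈ Set.Ioo (0 : ℝ) 1 → ¬ AccPt x (Filter.principal (fixSet f))}ᶜ) := by
  refine ⟨HP.BB, HP.compl_subset_BB, HP.measurableSet_BB,
    Measure.map HP.FF (volume.restrict (Set.Ioo (0:ℝ) 1)), ?_, ?_⟩
  · exact Measure.isProbabilityMeasure_map HP.continuous_FF.measurable.aemeasurable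
  · intro g h
    rw [Measure.map_apply HP.continuous_FF.measurable (HP.measurableSet_conj_BB g h),
      Measure.restrict_apply (HP.continuous_FF.measurable (HP.measurableSet_conj_BB g h))]
    refine measure_mono_null ?_
      (measure_iUnion_null fun k : ℕ => HP.bad_null g h k)
    rintro a ⟨hmem, haIoo⟩
    have hmem' : g⁻¹ * HP.FF a * h⁻¹ ∈ HP.BB := by
      rw [HP.image_conj_eq] at hmem
      exact hmem
    rw [HP.BB, Set.mem_iUnion] at hmem'
    obtain ⟨k, hk⟩ := hmem'
    exact Set.mem_iUnion.2 ⟨k, haIoo, hk⟩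

end
end

section
/- The set 𝓗 = {f ∈ Homeo⁺([0,1]) : for every x₀ ∈ fix(f) ∩ (0,1), the function x ↦ f(x) − x does not have a local extremum at x₀} is co-Haar null in Homeo⁺([0,1]). -/
open MeasureTheory unitInterval Set

noncomputable section

noncomputable section

/-- parameter in [1/4, 1/2] -/
def cpar (t : ℝ) : ℝ := (1 + max 0 (min 1 t)) / 4

lemma cpar_mem (t : ℝ) : cpar t ∈ Icc (1/4 : ℝ) (1/2) := by
  have h1 : (0:ℝ) ≤ max 0 (min 1 t) := le_max_left _ _
  have h2 : max 0 (min 1 t) ≤ 1 := max_le (by norm_num) (min_le_left _ _)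
  constructor <;> simp only [cpar] <;> linarith

lemma cpar_lt {t1 t2 : ℝ} (h1 : t1 ∈ Icc (0:ℝ) 1) (h2 : t2 ∈ Icc (0:ℝ) 1)
    (h : t1 < t2) : cpar t1 < cpar t2 := by
  have e1 : max 0 (min 1 t1) = t1 := by
    rw [min_eq_right h1.2, max_eq_right h1.1]
  have e2 : max 0 (min 1 t2) = t2 := by
    rw [min_eq_right h2.2, max_eq_right h2.1]
  simp only [cpar, e1, e2]; linarith

lemma cpar_cont : Continuous cpar := by
  unfold cpar; fun_prop

/-- the piecewise-linear homeomorphism with slope break -/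
def Hfun (c x : ℝ) : ℝ := max (2*c*x) ((2-2*c)*x + (2*c-1))

lemma Hfun_cont : Continuous fun p : ℝ × ℝ => Hfun p.1 p.2 := by
  unfold Hfun; fun_prop

lemma Hfun_mem {c x : ℝ} (hc : c ∈ Icc (1/4:ℝ) (1/2)) (hx : x ∈ Icc (0:ℝ) 1) :
    Hfun c x ∈ Icc (0:ℝ) 1 := by
  obtain ⟨hc1, hc2⟩ := hc; obtain ⟨hx1, hx2⟩ := hx
  constructor
  · exact le_trans (by nlinarith) (le_max_left _ _)
  · exact max_le (by nlinarith) (by nlinarith)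

lemma Hfun_strictMonoX {c : ℝ} (hc : c ∈ Icc (1/4:ℝ) (1/2)) : StrictMono (Hfun c) := by
  intro a b hab
  exact max_lt_max (by nlinarith [hc.1]) (by nlinarith [hc.2])

lemma Hfun_lt_c {c1 c2 x : ℝ} (h : c1 < c2) (hx0 : 0 < x) (hx1 : x < 1) :
    Hfun c1 x < Hfun c2 x :=
  max_lt_max (by nlinarith) (by nlinarith)

lemma Hfun_zero {c : ℝ} (hc : c ∈ Icc (1/4:ℝ) (1/2)) : Hfun c 0 = 0 := by
  simp only [Hfun, mul_zero, zero_add]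
  exact max_eq_left (by linarith [hc.2])

lemma Hfun_one {c : ℝ} (hc : c ∈ Icc (1/4:ℝ) (1/2)) : Hfun c 1 = 1 := by
  simp only [Hfun, mul_one]
  have h : (2-2*c) + (2*c-1) = 1 := by ring
  rw [h]
  exact max_eq_right (by linarith [hc.2])

def F0 (t : ℝ) (x : I) : I := ⟨Hfun (cpar t) x, Hfun_mem (cpar_mem t) x.2⟩

lemma F0_strictMono (t : ℝ) : StrictMono (F0 t) := by
  intro a b hab
  exact Subtype.mk_lt_mk.2 (Hfun_strictMonoX (cpar_mem t) (Subtype.coe_lt_coe.2 hab))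

lemma F0_surj (t : ℝ) : Function.Surjective (F0 t) := by
  intro y
  have hcont : ContinuousOn (fun x : ℝ => Hfun (cpar t) x) (Icc 0 1) :=
    (Hfun_cont.comp (continuous_const.prodMk continuous_id)).continuousOn
  have hy : (y : ℝ) ∈ Icc (Hfun (cpar t) 0) (Hfun (cpar t) 1) := by
    rw [Hfun_zero (cpar_mem t), Hfun_one (cpar_mem t)]; exact y.2
  obtain ⟨x, hx, hEq⟩ := intermediate_value_Icc (by norm_num : (0:ℝ) ≤ 1) hcont hy
  exact ⟨⟨x, hx⟩, Subtype.ext hEq⟩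

end

def Fhomeo (t : ℝ) : I ≃ₜ I :=
  (StrictMono.orderIsoOfSurjective (F0 t) (F0_strictMono t) (F0_surj t)).toHomeomorph

lemma Fhomeo_apply (t : ℝ) (x : I) : Fhomeo t x = F0 t x := rfl

lemma Fhomeo_mem (t : ℝ) : Fhomeo t ∈ HomeoPlusI := (F0_strictMono t).monotone

def FF (t : ℝ) : HomeoPlusI := ⟨Fhomeo t, Fhomeo_mem t⟩

lemma FF_cont : Continuous FF := by
  apply Continuous.subtype_mk
  apply continuous_induced_rng.2
  apply ContinuousMap.continuous_of_continuous_uncurry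
  show Continuous fun p : ℝ × I => Fhomeo p.1 p.2
  simp only [Fhomeo_apply, F0]
  exact Continuous.subtype_mk
    (Hfun_cont.comp ((cpar_cont.comp continuous_fst).prodMk
      (continuous_subtype_val.comp continuous_snd))) _

/-- coercion to `C(I,I)` is continuous -/
def coeC (f : HomeoPlusI) : C(I, I) := ⟨⇑(f : I ≃ₜ I), (f : I ≃ₜ I).continuous⟩

lemma coeHomeoC_cont : Continuous fun f : I ≃ₜ I => (⟨⇑f, f.continuous⟩ : C(I, I)) :=
  continuous_induced_dom

lemma coeC_cont : Continuous coeC := coeHomeoC_cont.comp continuous_subtype_val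

/-- evaluation -/
def ev (x : I) (f : HomeoPlusI) : ℝ := ((f : I ≃ₜ I) x : ℝ)

lemma ev_cont (x : I) : Continuous (ev x) := by
  have h : Continuous fun φ : C(I, I) => φ x := continuous_eval_const x
  exact continuous_subtype_val.comp (h.comp coeC_cont)

lemma mul_apply' (a b : HomeoPlusI) (x : I) :
    ((a * b : HomeoPlusI) : I ≃ₜ I) x = (a : I ≃ₜ I) ((b : I ≃ₜ I) x) := rfl

lemma transl_cont (g h : HomeoPlusI) : Continuous fun b => g * b * h := by
  apply Continuous.subtype_mk
  apply continuous_induced_rng.2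
  apply ContinuousMap.continuous_of_continuous_uncurry
  show Continuous fun p : HomeoPlusI × I =>
    (g : I ≃ₜ I) ((p.1 : I ≃ₜ I) ((h : I ≃ₜ I) p.2))
  have hev : Continuous fun p : C(I, I) × I => p.1 p.2 := continuous_eval
  exact (g : I ≃ₜ I).continuous.comp
    (hev.comp
      ((coeC_cont.comp continuous_fst).prodMk
        ((h : I ≃ₜ I).continuous.comp continuous_snd)))

/-- elements are strictly monotone and fix the endpoints -/
lemma strictMono_mem (g : HomeoPlusI) : StrictMono ⇑(g : I ≃ₜ I) :=
  (g.2 : Monotone _).strictMono_of_injective (g : I ≃ₜ I).injective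

lemma mem_interior_map (h : HomeoPlusI) {x : I} (hx0 : 0 < (x : ℝ)) (hx1 : (x : ℝ) < 1) :
    0 < (((h : I ≃ₜ I) x : I) : ℝ) ∧ (((h : I ≃ₜ I) x : I) : ℝ) < 1 := by
  have hsm := strictMono_mem h
  have h0 : (h : I ≃ₜ I) 0 = 0 := by
    obtain ⟨y, hy⟩ := (h : I ≃ₜ I).surjective 0
    have h1 := hsm.monotone (show (0:I) ≤ y from nonneg')
    rw [hy] at h1
    exact le_antisymm h1 nonneg'
  have h1 : (h : I ≃ₜ I) 1 = 1 := by
    obtain ⟨y, hy⟩ := (h : I ≃ₜ I).surjective 1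
    have h2 := hsm.monotone (show y ≤ (1:I) from le_one')
    rw [hy] at h2
    exact le_antisymm le_one' h2
  constructor
  · have := hsm (show (0:I) < x from Subtype.coe_lt_coe.1 (by simpa using hx0))
    rw [h0] at this
    simpa using (Subtype.coe_lt_coe.2 this)
  · have := hsm (show x < (1:I) from Subtype.coe_lt_coe.1 (by simpa using hx1))
    rw [h1] at this
    simpa using (Subtype.coe_lt_coe.2 this)

/-- f ≤ id on [p,q] and sup of (f - id) on [p,q] is 0 -/
def pieceLe (p q : ℚ) : Set HomeoPlusI :=
  {f | (∀ x : I, (p:ℝ) ≤ x → (x:ℝ) ≤ q → ev x f ≤ x) ∧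
    ∀ n : ℕ, ∃ x : I, (p:ℝ) ≤ x ∧ (x:ℝ) ≤ q ∧ (x:ℝ) - 1/(n+1) < ev x f}

def pieceGe (p q : ℚ) : Set HomeoPlusI :=
  {f | (∀ x : I, (p:ℝ) ≤ x → (x:ℝ) ≤ q → (x:ℝ) ≤ ev x f) ∧
    ∀ n : ℕ, ∃ x : I, (p:ℝ) ≤ x ∧ (x:ℝ) ≤ q ∧ ev x f < (x:ℝ) + 1/(n+1)}

lemma isClosed_forall_le (p q : ℚ) :
    IsClosed {f : HomeoPlusI | ∀ x : I, (p:ℝ) ≤ x → (x:ℝ) ≤ q → ev x f ≤ x} := by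
  have : {f : HomeoPlusI | ∀ x : I, (p:ℝ) ≤ x → (x:ℝ) ≤ q → ev x f ≤ x} =
      ⋂ x : I, {f | (p:ℝ) ≤ x → (x:ℝ) ≤ q → ev x f ≤ x} := by
    ext f; simp [Set.mem_iInter]
  rw [this]
  refine isClosed_iInter fun x => ?_
  by_cases hx : (p:ℝ) ≤ x ∧ (x:ℝ) ≤ q
  · have h2 : {f : HomeoPlusI | (p:ℝ) ≤ x → (x:ℝ) ≤ q → ev x f ≤ x} =
        {f | ev x f ≤ x} := by
      ext f; simp [hx.1, hx.2]
    rw [h2]; exact isClosed_le (ev_cont x) continuous_const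
  · have h2 : {f : HomeoPlusI | (p:ℝ) ≤ x → (x:ℝ) ≤ q → ev x f ≤ x} = univ :=
      eq_univ_of_forall fun f h1 h2 => absurd ⟨h1, h2⟩ hx
    rw [h2]; exact isClosed_univ

lemma isClosed_forall_ge (p q : ℚ) :
    IsClosed {f : HomeoPlusI | ∀ x : I, (p:ℝ) ≤ x → (x:ℝ) ≤ q → (x:ℝ) ≤ ev x f} := by
  have : {f : HomeoPlusI | ∀ x : I, (p:ℝ) ≤ x → (x:ℝ) ≤ q → (x:ℝ) ≤ ev x f} =
      ⋂ x : I, {f | (p:ℝ) ≤ x → (x:ℝ) ≤ q → (x:ℝ) ≤ ev x f} := by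
    ext f; simp [Set.mem_iInter]
  rw [this]
  refine isClosed_iInter fun x => ?_
  by_cases hx : (p:ℝ) ≤ x ∧ (x:ℝ) ≤ q
  · have h2 : {f : HomeoPlusI | (p:ℝ) ≤ x → (x:ℝ) ≤ q → (x:ℝ) ≤ ev x f} =
        {f | (x:ℝ) ≤ ev x f} := by
      ext f; simp [hx.1, hx.2]
    rw [h2]; exact isClosed_le continuous_const (ev_cont x)
  · have h2 : {f : HomeoPlusI | (p:ℝ) ≤ x → (x:ℝ) ≤ q → (x:ℝ) ≤ ev x f} = univ :=
      eq_univ_of_forall fun f h1 h2 => absurd ⟨h1, h2⟩ hx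
    rw [h2]; exact isClosed_univ

lemma isOpen_exists_lt (p q : ℚ) (c : ℝ) :
    IsOpen {f : HomeoPlusI | ∃ x : I, (p:ℝ) ≤ x ∧ (x:ℝ) ≤ q ∧ (x:ℝ) - c < ev x f} := by
  have : {f : HomeoPlusI | ∃ x : I, (p:ℝ) ≤ x ∧ (x:ℝ) ≤ q ∧ (x:ℝ) - c < ev x f} =
      ⋃ x : I, {f | (p:ℝ) ≤ x ∧ (x:ℝ) ≤ q ∧ (x:ℝ) - c < ev x f} := by
    ext f; simp [Set.mem_iUnion]
  rw [this]
  refine isOpen_iUnion fun x => ?_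
  by_cases hx : (p:ℝ) ≤ x ∧ (x:ℝ) ≤ q
  · have h2 : {f : HomeoPlusI | (p:ℝ) ≤ x ∧ (x:ℝ) ≤ q ∧ (x:ℝ) - c < ev x f} =
        {f | (x:ℝ) - c < ev x f} := by
      ext f; simp [hx.1, hx.2]
    rw [h2]; exact isOpen_lt continuous_const (ev_cont x)
  · have h2 : {f : HomeoPlusI | (p:ℝ) ≤ x ∧ (x:ℝ) ≤ q ∧ (x:ℝ) - c < ev x f} = ∅ := by
      ext f; simp only [mem_setOf_eq, mem_empty_iff_false, iff_false]
      rintro ⟨h1, h2, -⟩; exact hx ⟨h1, h2⟩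
    rw [h2]; exact isOpen_empty

lemma isOpen_exists_gt (p q : ℚ) (c : ℝ) :
    IsOpen {f : HomeoPlusI | ∃ x : I, (p:ℝ) ≤ x ∧ (x:ℝ) ≤ q ∧ ev x f < (x:ℝ) + c} := by
  have : {f : HomeoPlusI | ∃ x : I, (p:ℝ) ≤ x ∧ (x:ℝ) ≤ q ∧ ev x f < (x:ℝ) + c} =
      ⋃ x : I, {f | (p:ℝ) ≤ x ∧ (x:ℝ) ≤ q ∧ ev x f < (x:ℝ) + c} := by
    ext f; simp [Set.mem_iUnion]
  rw [this]
  refine isOpen_iUnion fun x => ?_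
  by_cases hx : (p:ℝ) ≤ x ∧ (x:ℝ) ≤ q
  · have h2 : {f : HomeoPlusI | (p:ℝ) ≤ x ∧ (x:ℝ) ≤ q ∧ ev x f < (x:ℝ) + c} =
        {f | ev x f < (x:ℝ) + c} := by
      ext f; simp [hx.1, hx.2]
    rw [h2]; exact isOpen_lt (ev_cont x) continuous_const
  · have h2 : {f : HomeoPlusI | (p:ℝ) ≤ x ∧ (x:ℝ) ≤ q ∧ ev x f < (x:ℝ) + c} = ∅ := by
      ext f; simp only [mem_setOf_eq, mem_empty_iff_false, iff_false]
      rintro ⟨h1, h2, -⟩; exact hx ⟨h1, h2⟩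
    rw [h2]; exact isOpen_empty

lemma measurable_pieceLe (p q : ℚ) : MeasurableSet (pieceLe p q) := by
  have : pieceLe p q =
      {f : HomeoPlusI | ∀ x : I, (p:ℝ) ≤ x → (x:ℝ) ≤ q → ev x f ≤ x} ∩
      ⋂ n : ℕ, {f | ∃ x : I, (p:ℝ) ≤ x ∧ (x:ℝ) ≤ q ∧ (x:ℝ) - 1/(n+1) < ev x f} := by
    ext f; simp [pieceLe, Set.mem_iInter]
  rw [this]
  exact (isClosed_forall_le p q).measurableSet.inter
    (MeasurableSet.iInter fun n => (isOpen_exists_lt p q _).measurableSet)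

lemma measurable_pieceGe (p q : ℚ) : MeasurableSet (pieceGe p q) := by
  have : pieceGe p q =
      {f : HomeoPlusI | ∀ x : I, (p:ℝ) ≤ x → (x:ℝ) ≤ q → (x:ℝ) ≤ ev x f} ∩
      ⋂ n : ℕ, {f | ∃ x : I, (p:ℝ) ≤ x ∧ (x:ℝ) ≤ q ∧ ev x f < (x:ℝ) + 1/(n+1)} := by
    ext f; simp [pieceGe, Set.mem_iInter]
  rw [this]
  exact (isClosed_forall_ge p q).measurableSet.inter
    (MeasurableSet.iInter fun n => (isOpen_exists_gt p q _).measurableSet)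

def badB : Set HomeoPlusI :=
  ⋃ p : ℚ, ⋃ q : ℚ, ⋃ _ : 0 < (p:ℝ) ∧ (q:ℝ) < 1, (pieceLe p q ∪ pieceGe p q)

lemma measurable_badB : MeasurableSet badB :=
  MeasurableSet.iUnion fun p => MeasurableSet.iUnion fun q =>
    MeasurableSet.iUnion fun _ => (measurable_pieceLe p q).union (measurable_pieceGe p q)

lemma cover :
    ({f : HomeoPlusI |
        ∀ x₀ : I, x₀ ∈ fixSet f → (x₀ : ℝ) ∈ Set.Ioo (0 : ℝ) 1 →
          ¬ IsLocalExtr (fun x : I => ((f : I ≃ₜ I) x : ℝ) - (x : ℝ)) x₀}ᶜ) ⊆ badB := by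
  intro f hf
  simp only [mem_compl_iff, mem_setOf_eq] at hf
  push_neg at hf
  obtain ⟨x₀, hfix, hioo, hext⟩ := hf
  have hval : (((f : I ≃ₜ I) x₀ : I) : ℝ) = (x₀ : ℝ) := by
    rw [show (f : I ≃ₜ I) x₀ = x₀ from hfix]
  rcases hext with hmin | hmax
  · -- local min : pieceGe
    obtain ⟨ε, εpos, hball⟩ := Metric.eventually_nhds_iff.1 hmin
    obtain ⟨p, hp1, hp2⟩ := exists_rat_btwn
      (show max 0 ((x₀:ℝ) - ε) < (x₀:ℝ) from max_lt hioo.1 (by linarith))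
    obtain ⟨q, hq1, hq2⟩ := exists_rat_btwn
      (show (x₀:ℝ) < min 1 ((x₀:ℝ) + ε) from lt_min hioo.2 (by linarith))
    have hpε : (x₀:ℝ) - ε < p := lt_of_le_of_lt (le_max_right _ _) hp1
    have hqε : (q:ℝ) < (x₀:ℝ) + ε := lt_of_lt_of_le hq2 (min_le_right _ _)
    have hp0 : 0 < (p:ℝ) := lt_of_le_of_lt (le_max_left _ _) hp1
    have hq1' : (q:ℝ) < 1 := lt_of_lt_of_le hq2 (min_le_left _ _)
    simp only [badB, mem_iUnion]
    refine ⟨p, q, ⟨hp0, hq1'⟩, Or.inr ⟨?_, ?_⟩⟩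
    · intro x hx1 hx2
      have hdist : dist x x₀ < ε := by
        rw [Subtype.dist_eq, Real.dist_eq]
        exact abs_lt.2 ⟨by linarith, by linarith⟩
      have := hball hdist
      simp only [hval] at this
      simp only [ev]
      linarith
    · intro n
      refine ⟨x₀, hp2.le, hq1.le, ?_⟩
      have hn : (0:ℝ) < 1/(n+1) := by positivity
      simp only [ev, hval]
      linarith
  · -- local max : pieceLe
    obtain ⟨ε, εpos, hball⟩ := Metric.eventually_nhds_iff.1 hmax
    obtain ⟨p, hp1, hp2⟩ := exists_rat_btwn
      (show max 0 ((x₀:ℝ) - ε) < (x₀:ℝ) from max_lt hioo.1 (by linarith))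
    obtain ⟨q, hq1, hq2⟩ := exists_rat_btwn
      (show (x₀:ℝ) < min 1 ((x₀:ℝ) + ε) from lt_min hioo.2 (by linarith))
    have hpε : (x₀:ℝ) - ε < p := lt_of_le_of_lt (le_max_right _ _) hp1
    have hqε : (q:ℝ) < (x₀:ℝ) + ε := lt_of_lt_of_le hq2 (min_le_right _ _)
    have hp0 : 0 < (p:ℝ) := lt_of_le_of_lt (le_max_left _ _) hp1
    have hq1' : (q:ℝ) < 1 := lt_of_lt_of_le hq2 (min_le_left _ _)
    simp only [badB, mem_iUnion]
    refine ⟨p, q, ⟨hp0, hq1'⟩, Or.inl ⟨?_, ?_⟩⟩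
    · intro x hx1 hx2
      have hdist : dist x x₀ < ε := by
        rw [Subtype.dist_eq, Real.dist_eq]
        exact abs_lt.2 ⟨by linarith, by linarith⟩
      have := hball hdist
      simp only [hval] at this
      simp only [ev]
      linarith
    · intro n
      refine ⟨x₀, hp2.le, hq1.le, ?_⟩
      have hn : (0:ℝ) < 1/(n+1) := by positivity
      simp only [ev, hval]
      linarith

lemma ev_mul3 (a b c : HomeoPlusI) (x : I) :
    ev x (a * b * c) = (((a : I ≃ₜ I) ((b : I ≃ₜ I) ((c : I ≃ₜ I) x)) : I) : ℝ) := rfl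

lemma key_lt (g h : HomeoPlusI) {t1 t2 : ℝ} (ht1 : t1 ∈ Icc (0:ℝ) 1)
    (ht2 : t2 ∈ Icc (0:ℝ) 1) (hlt : t1 < t2) (x : I) (hx0 : 0 < (x:ℝ)) (hx1 : (x:ℝ) < 1) :
    ev x (g * FF t1 * h) < ev x (g * FF t2 * h) := by
  have hy := mem_interior_map h hx0 hx1
  have hF : (FF t1 : I ≃ₜ I) ((h : I ≃ₜ I) x) < (FF t2 : I ≃ₜ I) ((h : I ≃ₜ I) x) := by
    show F0 t1 ((h : I ≃ₜ I) x) < F0 t2 ((h : I ≃ₜ I) x)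
    exact Subtype.mk_lt_mk.2 (Hfun_lt_c (cpar_lt ht1 ht2 hlt) hy.1 hy.2)
  have hg := strictMono_mem g hF
  rw [ev_mul3, ev_mul3]
  exact Subtype.coe_lt_coe.2 hg

lemma key_le_false (g h : HomeoPlusI) (p q : ℚ) {t1 t2 : ℝ}
    (ht1 : t1 ∈ Icc (0:ℝ) 1) (ht2 : t2 ∈ Icc (0:ℝ) 1) (hlt : t1 < t2)
    (hp : 0 < (p:ℝ)) (hq : (q:ℝ) < 1)
    (m1 : g * FF t1 * h ∈ pieceLe p q) (m2 : g * FF t2 * h ∈ pieceLe p q) : False := by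
  set f1 := g * FF t1 * h with hf1
  set f2 := g * FF t2 * h with hf2
  set K : Set I := (fun x : I => (x:ℝ)) ⁻¹' (Icc (p:ℝ) q) with hK
  have hKc : IsCompact K := (isClosed_Icc.preimage continuous_subtype_val).isCompact
  obtain ⟨x₁, hx₁p, hx₁q, -⟩ := m1.2 0
  have Kne : K.Nonempty := ⟨x₁, ⟨hx₁p, hx₁q⟩⟩
  set D : I → ℝ := fun x => ev x f2 - ev x f1 with hD
  have Dcont : Continuous D := by
    apply Continuous.sub
    · exact continuous_subtype_val.comp (f2 : I ≃ₜ I).continuous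
    · exact continuous_subtype_val.comp (f1 : I ≃ₜ I).continuous
  have Dpos : ∀ x ∈ K, 0 < D x := by
    intro x hx
    have hx0 : 0 < (x:ℝ) := lt_of_lt_of_le hp hx.1
    have hx1 : (x:ℝ) < 1 := lt_of_le_of_lt hx.2 hq
    exact sub_pos.2 (key_lt g h ht1 ht2 hlt x hx0 hx1)
  obtain ⟨x₀, hx₀K, hmin⟩ := hKc.exists_isMinOn Kne Dcont.continuousOn
  obtain ⟨n, hn⟩ := exists_nat_one_div_lt (Dpos x₀ hx₀K)
  obtain ⟨x, hxp, hxq, hx⟩ := m1.2 n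
  have h1 : ev x f2 ≤ x := m2.1 x hxp hxq
  have h2 : ev x₀ f2 - ev x₀ f1 ≤ ev x f2 - ev x f1 := hmin ⟨hxp, hxq⟩
  have hn' : (1:ℝ)/(n+1) < ev x₀ f2 - ev x₀ f1 := hn
  linarith

lemma key_ge_false (g h : HomeoPlusI) (p q : ℚ) {t1 t2 : ℝ}
    (ht1 : t1 ∈ Icc (0:ℝ) 1) (ht2 : t2 ∈ Icc (0:ℝ) 1) (hlt : t1 < t2)
    (hp : 0 < (p:ℝ)) (hq : (q:ℝ) < 1)
    (m1 : g * FF t1 * h ∈ pieceGe p q) (m2 : g * FF t2 * h ∈ pieceGe p q) : False := by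
  set f1 := g * FF t1 * h with hf1
  set f2 := g * FF t2 * h with hf2
  set K : Set I := (fun x : I => (x:ℝ)) ⁻¹' (Icc (p:ℝ) q) with hK
  have hKc : IsCompact K := (isClosed_Icc.preimage continuous_subtype_val).isCompact
  obtain ⟨x₁, hx₁p, hx₁q, -⟩ := m1.2 0
  have Kne : K.Nonempty := ⟨x₁, ⟨hx₁p, hx₁q⟩⟩
  set D : I → ℝ := fun x => ev x f2 - ev x f1 with hD
  have Dcont : Continuous D := by
    apply Continuous.sub
    · exact continuous_subtype_val.comp (f2 : I ≃ₜ I).continuous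
    · exact continuous_subtype_val.comp (f1 : I ≃ₜ I).continuous
  have Dpos : ∀ x ∈ K, 0 < D x := by
    intro x hx
    have hx0 : 0 < (x:ℝ) := lt_of_lt_of_le hp hx.1
    have hx1 : (x:ℝ) < 1 := lt_of_le_of_lt hx.2 hq
    exact sub_pos.2 (key_lt g h ht1 ht2 hlt x hx0 hx1)
  obtain ⟨x₀, hx₀K, hmin⟩ := hKc.exists_isMinOn Kne Dcont.continuousOn
  obtain ⟨n, hn⟩ := exists_nat_one_div_lt (Dpos x₀ hx₀K)
  obtain ⟨x, hxp, hxq, hx⟩ := m2.2 n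
  have h1 : (x:ℝ) ≤ ev x f1 := m1.1 x hxp hxq
  have h2 : ev x₀ f2 - ev x₀ f1 ≤ ev x f2 - ev x f1 := hmin ⟨hxp, hxq⟩
  have hn' : (1:ℝ)/(n+1) < ev x₀ f2 - ev x₀ f1 := hn
  linarith

lemma subsingleton_pieceLe (g h : HomeoPlusI) (p q : ℚ) (hp : 0 < (p:ℝ)) (hq : (q:ℝ) < 1) :
    Set.Subsingleton {t : ℝ | t ∈ Icc (0:ℝ) 1 ∧ g * FF t * h ∈ pieceLe p q} := by
  rintro t1 ⟨ht1, hm1⟩ t2 ⟨ht2, hm2⟩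
  by_contra hne
  rcases Ne.lt_or_gt hne with hlt | hlt
  · exact key_le_false g h p q ht1 ht2 hlt hp hq hm1 hm2
  · exact key_le_false g h p q ht2 ht1 hlt hp hq hm2 hm1

lemma subsingleton_pieceGe (g h : HomeoPlusI) (p q : ℚ) (hp : 0 < (p:ℝ)) (hq : (q:ℝ) < 1) :
    Set.Subsingleton {t : ℝ | t ∈ Icc (0:ℝ) 1 ∧ g * FF t * h ∈ pieceGe p q} := by
  rintro t1 ⟨ht1, hm1⟩ t2 ⟨ht2, hm2⟩
  by_contra hne
  rcases Ne.lt_or_gt hne with hlt | hlt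
  · exact key_ge_false g h p q ht1 ht2 hlt hp hq hm1 hm2
  · exact key_ge_false g h p q ht2 ht1 hlt hp hq hm2 hm1

def nu : Measure ℝ := volume.restrict (Icc (0:ℝ) 1)

instance : IsProbabilityMeasure nu := by
  constructor
  rw [nu, Measure.restrict_apply_univ, Real.volume_Icc]
  norm_num

lemma nu_subsingleton_null {S : Set ℝ} (hS : S.Subsingleton) : nu S = 0 := by
  have h1 : volume S = 0 := hS.measure_zero volume
  have h2 : nu S ≤ volume S := Measure.le_iff'.1 Measure.restrict_le_self S
  exact le_antisymm (h2.trans_eq h1) zero_le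

lemma nu_compl_null : nu (Icc (0:ℝ) 1)ᶜ = 0 := by
  rw [nu, Measure.restrict_apply measurableSet_Icc.compl]
  simp

lemma main_null (g h : HomeoPlusI) : nu {t : ℝ | g * FF t * h ∈ badB} = 0 := by
  have hsub : {t : ℝ | g * FF t * h ∈ badB} ⊆
      ⋃ p : ℚ, ⋃ q : ℚ, ⋃ _ : 0 < (p:ℝ) ∧ (q:ℝ) < 1,
        (({t : ℝ | t ∈ Icc (0:ℝ) 1 ∧ g * FF t * h ∈ pieceLe p q} ∪
          {t : ℝ | t ∈ Icc (0:ℝ) 1 ∧ g * FF t * h ∈ pieceGe p q}) ∪ (Icc (0:ℝ) 1)ᶜ) := by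
    intro t ht
    simp only [badB, mem_iUnion, mem_setOf_eq] at ht
    obtain ⟨p, q, hpq, hmem⟩ := ht
    simp only [mem_iUnion]
    refine ⟨p, q, hpq, ?_⟩
    by_cases htI : t ∈ Icc (0:ℝ) 1
    · rcases hmem with hm | hm
      · exact Or.inl (Or.inl ⟨htI, hm⟩)
      · exact Or.inl (Or.inr ⟨htI, hm⟩)
    · exact Or.inr htI
  apply measure_mono_null hsub
  apply measure_iUnion_null; intro p
  apply measure_iUnion_null; intro q
  apply measure_iUnion_null; intro hpq
  apply measure_union_null _ nu_compl_null
  apply measure_union_null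
  · exact nu_subsingleton_null (subsingleton_pieceLe g h p q hpq.1 hpq.2)
  · exact nu_subsingleton_null (subsingleton_pieceGe g h p q hpq.1 hpq.2)

/-- The set of `f ∈ Homeo⁺([0,1])` such that `x ↦ f x - x` has no local extremum at any fixed
point of `f` lying in `(0,1)` is co-Haar null. -/
theorem stmt_3 :
    IsHaarNull
      ({f : HomeoPlusI |
        ∀ x₀ : I, x₀ ∈ fixSet f → (x₀ : ℝ) ∈ Set.Ioo (0 : ℝ) 1 →
          ¬ IsLocalExtr (fun x : I => ((f : I ≃ₜ I) x : ℝ) - (x : ℝ)) x₀}ᶜ) := by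
  refine ⟨badB, cover, measurable_badB, Measure.map FF nu, ?_, ?_⟩
  · exact Measure.isProbabilityMeasure_map FF_cont.measurable.aemeasurable
  · intro g h
    have himg : (fun b => g * b * h) '' badB = (fun b => g⁻¹ * b * h⁻¹) ⁻¹' badB := by
      ext b
      constructor
      · rintro ⟨a, ha, rfl⟩
        have : g⁻¹ * (g * a * h) * h⁻¹ = a := by group
        show g⁻¹ * (g * a * h) * h⁻¹ ∈ badB
        rwa [this]
      · intro hb
        exact ⟨g⁻¹ * b * h⁻¹, hb, by group⟩
    rw [himg, Measure.map_apply FF_cont.measurable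
      ((transl_cont g⁻¹ h⁻¹).measurable measurable_badB)]
    exact main_null g⁻¹ h⁻¹
end
end

section
/- For every q ∈ Homeo⁺([0,1]), the set of those f ∈ Homeo⁺([0,1]) for which the set {x ∈ (0,1) : f(x) = q(x)} is infinite is neither Haar null nor co-Haar null. -/
open MeasureTheory unitInterval Set

noncomputable section

open scoped ENNReal
open Filter
namespace HP

/-- Data for one side (left: strictly decreasing to 0; right: strictly increasing to 1),
spliced into a ℤ-indexed strictly monotone sequence in (0,1). -/
structure SideData where
  A : ℕ → ℝ
  R : ℕ → ℝ
  hA : StrictAnti A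
  hR : StrictMono R
  hAR : A 0 = R 0
  hApos : ∀ n, 0 < A n
  hR1 : ∀ n, R n < 1
  hAsmall : ∀ t, 0 < t → ∃ n, A n < t
  hRbig : ∀ t, t < 1 → ∃ n, t < R n

namespace SideData

def X (d : SideData) : ℤ → ℝ := fun k => if k ≤ 0 then d.A (-k).toNat else d.R k.toNat

lemma X_neg (d : SideData) (m : ℕ) : d.X (-(m:ℤ)) = d.A m := by
  simp [X]

lemma X_pos (d : SideData) (m : ℕ) : d.X ((m:ℤ)+1) = d.R (m+1) := by
  have h : ¬ ((m:ℤ)+1 ≤ 0) := by omega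
  simp only [X, if_neg h]
  have h2 : ((m:ℤ)+1).toNat = m + 1 := by omega
  rw [h2]

lemma strictMono (d : SideData) : StrictMono d.X := by
  apply strictMono_int_of_lt_succ
  intro k
  rcases le_or_gt k (-1) with hk | hk
  · have h1 : k ≤ 0 := by omega
    have h2 : k + 1 ≤ 0 := by omega
    simp only [X, if_pos h1, if_pos h2]
    apply d.hA
    omega
  · rcases le_or_gt k 0 with hk0 | hk0
    · have hk' : k = 0 := by omega
      subst hk'
      simp only [X]
      norm_num
      rw [d.hAR]
      exact d.hR (by norm_num)
    · have h1 : ¬ (k ≤ 0) := by omega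
      have h2 : ¬ (k + 1 ≤ 0) := by omega
      simp only [X, if_neg h1, if_neg h2]
      apply d.hR
      omega

lemma mem_Ioo (d : SideData) (k : ℤ) : d.X k ∈ Ioo (0:ℝ) 1 := by
  constructor
  · by_cases h : k ≤ 0
    · simp only [X, if_pos h]; exact d.hApos _
    · simp only [X, if_neg h]
      calc (0:ℝ) < d.A 0 := d.hApos 0
        _ = d.R 0 := d.hAR
        _ ≤ d.R _ := (d.hR.monotone (Nat.zero_le _))
  · by_cases h : k ≤ 0
    · simp only [X, if_pos h]
      calc d.A _ ≤ d.A 0 := d.hA.antitone (Nat.zero_le _)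
        _ = d.R 0 := d.hAR
        _ < 1 := d.hR1 0
    · simp only [X, if_neg h]; exact d.hR1 _

lemma exists_lt (d : SideData) {t : ℝ} (ht : 0 < t) : ∃ k, d.X k < t := by
  obtain ⟨n, hn⟩ := d.hAsmall t ht
  exact ⟨-(n:ℤ), by rw [d.X_neg]; exact hn⟩

lemma exists_gt (d : SideData) {t : ℝ} (ht : t < 1) : ∃ k, t < d.X k := by
  obtain ⟨n, hn⟩ := d.hRbig t ht
  exact ⟨(n:ℤ)+1, by rw [d.X_pos]; exact lt_of_lt_of_le hn (d.hR.monotone (Nat.le_succ n))⟩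

lemma bracket (d : SideData) {t : ℝ} (h0 : 0 < t) (h1 : t < 1) :
    ∃ k, d.X k ≤ t ∧ t < d.X (k+1) := by
  obtain ⟨k₀, hk₀⟩ := d.exists_gt h1
  obtain ⟨k₁, hk₁⟩ := d.exists_lt h0
  obtain ⟨ub, hub, hmax⟩ := Int.exists_greatest_of_bdd (P := fun z => d.X z ≤ t)
    ⟨k₀, fun z hz => by
      by_contra hc
      push_neg at hc
      exact absurd (le_trans (d.strictMono (by omega)).le hz) (not_le.2 hk₀)⟩
    ⟨k₁, hk₁.le⟩
  refine ⟨ub, hub, ?_⟩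
  by_contra hc
  push_neg at hc
  have := hmax (ub+1) hc
  omega

lemma bracket_unique (d : SideData) {t : ℝ} {j k : ℤ}
    (hj : d.X j ≤ t) (hj' : t < d.X (j+1)) (hk : d.X k ≤ t) (hk' : t < d.X (k+1)) : j = k := by
  by_contra hne
  rcases lt_or_gt_of_ne hne with h | h
  · exact absurd (le_trans (d.strictMono.monotone (by omega : j+1 ≤ k)) hk) (not_le.2 hj')
  · exact absurd (le_trans (d.strictMono.monotone (by omega : k+1 ≤ j)) hj) (not_le.2 hk')

end SideData

def segFun (X Y : ℤ → ℝ) (k : ℤ) (t : ℝ) : ℝ :=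
  Y k + (t - X k) * (Y (k+1) - Y k) / (X (k+1) - X k)

open Classical in
def pickIdx (X : ℤ → ℝ) (t : ℝ) : ℤ :=
  if h : ∃ k, X k ≤ t ∧ t < X (k+1) then h.choose else 0

lemma pickIdx_spec {X : ℤ → ℝ} {t : ℝ} (h : ∃ k, X k ≤ t ∧ t < X (k+1)) :
    X (pickIdx X t) ≤ t ∧ t < X (pickIdx X t + 1) := by
  classical
  rw [pickIdx]
  rw [dif_pos h]
  exact h.choose_spec

def interpFun (X Y : ℤ → ℝ) (t : ℝ) : ℝ :=
  if t ≤ 0 then 0 else if 1 ≤ t then 1 else segFun X Y (pickIdx X t) t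

section Interp

variable (d e : SideData)

lemma seg_mem {k : ℤ} {t : ℝ} (h1 : d.X k ≤ t) (h2 : t < d.X (k+1)) :
    e.X k ≤ segFun d.X e.X k t ∧ segFun d.X e.X k t < e.X (k+1) := by
  have hdX : (0:ℝ) < d.X (k+1) - d.X k := by
    have := d.strictMono (lt_add_one k); linarith
  have heX : (0:ℝ) < e.X (k+1) - e.X k := by
    have := e.strictMono (lt_add_one k); linarith
  constructor
  · have : 0 ≤ (t - d.X k) * (e.X (k+1) - e.X k) / (d.X (k+1) - d.X k) := by
      apply div_nonneg _ hdX.le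
      apply mul_nonneg (by linarith) heX.le
    simp only [segFun]; linarith
  · have key : (t - d.X k) * (e.X (k+1) - e.X k) / (d.X (k+1) - d.X k) < e.X (k+1) - e.X k := by
      rw [div_lt_iff₀ hdX]; nlinarith
    simp only [segFun]; linarith

lemma interp_mem_Ioo {t : ℝ} (h0 : 0 < t) (h1 : t < 1) :
    interpFun d.X e.X t ∈ Ioo (0:ℝ) 1 := by
  have hb := d.bracket h0 h1
  have hs := pickIdx_spec hb
  have hm := seg_mem d e hs.1 hs.2
  rw [interpFun, if_neg (by linarith), if_neg (by linarith)]
  exact ⟨lt_of_lt_of_le (e.mem_Ioo _).1 hm.1, hm.2.trans (e.mem_Ioo _).2⟩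

lemma interp_zero : interpFun d.X e.X 0 = 0 := by rw [interpFun, if_pos le_rfl]

lemma interp_one : interpFun d.X e.X 1 = 1 := by
  rw [interpFun, if_neg (by norm_num), if_pos le_rfl]

lemma interp_mem_Icc (t : ℝ) : interpFun d.X e.X t ∈ Icc (0:ℝ) 1 := by
  rcases le_or_gt t 0 with h | h
  · rw [interpFun, if_pos h]; norm_num
  rcases le_or_gt 1 t with h' | h'
  · rw [interpFun, if_neg (by linarith), if_pos h']; norm_num
  · exact Ioo_subset_Icc_self (interp_mem_Ioo d e h h')

lemma interp_eq_data (k : ℤ) : interpFun d.X e.X (d.X k) = e.X k := by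
  have hio := d.mem_Ioo k
  rw [interpFun, if_neg (by linarith [hio.1]), if_neg (by linarith [hio.2])]
  have hb : ∃ j, d.X j ≤ d.X k ∧ d.X k < d.X (j+1) :=
    ⟨k, le_rfl, d.strictMono (lt_add_one k)⟩
  have hs := pickIdx_spec hb
  have hk : pickIdx d.X (d.X k) = k :=
    d.bracket_unique hs.1 hs.2 le_rfl (d.strictMono (lt_add_one k))
  rw [hk, segFun]
  simp

lemma pick_le_pick {s t : ℝ} (h0 : 0 < s) (hst : s < t) (h1 : t < 1) :
    pickIdx d.X s ≤ pickIdx d.X t := by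
  have hss := pickIdx_spec (d.bracket h0 (hst.trans h1))
  have hts := pickIdx_spec (d.bracket (h0.trans hst) h1)
  by_contra hc
  push_neg at hc
  have : d.X (pickIdx d.X t + 1) ≤ d.X (pickIdx d.X s) := d.strictMono.monotone (by omega)
  linarith [hss.1, hts.2]

lemma interp_strictMonoOn : StrictMonoOn (interpFun d.X e.X) (Icc (0:ℝ) 1) := by
  intro s hs t ht hst
  rcases le_or_gt s 0 with hs0 | hs0
  · rw [interpFun, if_pos hs0]
    have ht0 : 0 < t := lt_of_le_of_lt hs.1 hst
    rcases le_or_gt 1 t with ht1 | ht1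
    · rw [interpFun, if_neg (by linarith), if_pos ht1]; norm_num
    · exact (interp_mem_Ioo d e ht0 ht1).1
  · have hs1 : s < 1 := lt_of_lt_of_le hst ht.2
    rcases le_or_gt 1 t with ht1 | ht1
    · rw [show t = 1 from le_antisymm ht.2 ht1, interp_one]
      exact (interp_mem_Ioo d e hs0 hs1).2
    · -- both in Ioo
      have hbs := pickIdx_spec (d.bracket hs0 hs1)
      have hbt := pickIdx_spec (d.bracket (hs0.trans hst) ht1)
      have hks := seg_mem d e hbs.1 hbs.2
      have hkt := seg_mem d e hbt.1 hbt.2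
      rw [interpFun, if_neg (by linarith), if_neg (by linarith),
        interpFun, if_neg (by linarith), if_neg (by linarith)]
      rcases eq_or_lt_of_le (pick_le_pick d hs0 hst ht1) with heq | hlt
      · rw [← heq]
        set k := pickIdx d.X s
        have hdX : (0:ℝ) < d.X (k+1) - d.X k := by
          have := d.strictMono (lt_add_one k); linarith
        have heX : (0:ℝ) < e.X (k+1) - e.X k := by
          have := e.strictMono (lt_add_one k); linarith
        simp only [segFun]
        have : (s - d.X k) * (e.X (k+1) - e.X k) / (d.X (k+1) - d.X k)
            < (t - d.X k) * (e.X (k+1) - e.X k) / (d.X (k+1) - d.X k) := by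
          rw [div_lt_div_iff₀ hdX hdX]
          nlinarith [mul_pos (sub_pos.2 hst) (mul_pos heX hdX)]
        linarith
      · calc segFun d.X e.X (pickIdx d.X s) s < e.X (pickIdx d.X s + 1) := hks.2
          _ ≤ e.X (pickIdx d.X t) := e.strictMono.monotone (by omega)
          _ ≤ segFun d.X e.X (pickIdx d.X t) t := hkt.1

lemma interp_leftInv {t : ℝ} (h : t ∈ Icc (0:ℝ) 1) :
    interpFun e.X d.X (interpFun d.X e.X t) = t := by
  rcases eq_or_lt_of_le h.1 with h0 | h0
  · rw [← h0, interp_zero, interp_zero]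
  rcases eq_or_lt_of_le h.2 with h1 | h1
  · rw [h1, interp_one, interp_one]
  · -- t ∈ Ioo
    have hb := pickIdx_spec (d.bracket h0 h1)
    set k := pickIdx d.X t with hk
    have hm := seg_mem d e hb.1 hb.2
    have hv0 : 0 < segFun d.X e.X k t := lt_of_lt_of_le (e.mem_Ioo k).1 hm.1
    have hv1 : segFun d.X e.X k t < 1 := lt_trans hm.2 (e.mem_Ioo (k+1)).2
    have hin : interpFun d.X e.X t = segFun d.X e.X k t := by
      rw [interpFun, if_neg (by linarith), if_neg (by linarith)]
    rw [hin, interpFun, if_neg (by linarith), if_neg (by linarith)]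
    have hpk : pickIdx e.X (segFun d.X e.X k t) = k := by
      have hex : ∃ j, e.X j ≤ segFun d.X e.X k t ∧ segFun d.X e.X k t < e.X (j+1) :=
        ⟨k, hm.1, hm.2⟩
      have hs := pickIdx_spec hex
      exact e.bracket_unique hs.1 hs.2 hm.1 hm.2
    rw [hpk]
    have hdX : d.X (k+1) - d.X k ≠ 0 := by
      have := d.strictMono (lt_add_one k); intro hc; linarith
    have heX : e.X (k+1) - e.X k ≠ 0 := by
      have := e.strictMono (lt_add_one k); intro hc; linarith
    simp only [segFun]
    field_simp
    ring

end Interp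

section Pack

variable (d e : SideData)

def interpMap : I → I := fun t => ⟨interpFun d.X e.X t, interp_mem_Icc d e t⟩

lemma interpMap_strictMono : StrictMono (interpMap d e) := by
  intro a b hab
  exact Subtype.mk_lt_mk.2 (interp_strictMonoOn d e a.2 b.2 (Subtype.coe_lt_coe.2 hab))

lemma interpMap_surj : Function.Surjective (interpMap d e) := fun y =>
  ⟨interpMap e d y, Subtype.ext (interp_leftInv e d y.2)⟩

def interpIso : I ≃o I :=
  StrictMono.orderIsoOfSurjective _ (interpMap_strictMono d e) (interpMap_surj d e)

def interpHomeo : I ≃ₜ I := (interpIso d e).toHomeomorph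

def interpH : HomeoPlusI :=
  ⟨interpHomeo d e, fun a b hab => (interpMap_strictMono d e).monotone hab⟩

lemma interpH_apply (x : I) :
    ((interpH d e : I ≃ₜ I) x : ℝ) = interpFun d.X e.X x := rfl

lemma interpH_X (k : ℤ) (x : I) (hx : (x:ℝ) = d.X k) :
    ((interpH d e : I ≃ₜ I) x : ℝ) = e.X k := by
  rw [interpH_apply, hx]
  exact interp_eq_data d e k

lemma interpH_mono {x y : I} (h : x ≤ y) :
    (interpH d e : I ≃ₜ I) x ≤ (interpH d e : I ≃ₜ I) y :=
  (interpMap_strictMono d e).monotone h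

end Pack

section Meas

/-- Clamp a real number into the unit interval. -/
def cl (x : ℝ) : I := ⟨max 0 (min x 1), le_max_left _ _,
  max_le zero_le_one (min_le_right _ _)⟩

lemma cl_coe {x : ℝ} (h0 : 0 ≤ x) (h1 : x ≤ 1) : (cl x : ℝ) = x := by
  simp only [cl, min_eq_left h1, max_eq_right h0]

lemma coe_strictMono (u : HomeoPlusI) : StrictMono ⇑(u : I ≃ₜ I) :=
  u.2.strictMono_of_injective (u : I ≃ₜ I).toEquiv.injective

lemma apply_zero (u : HomeoPlusI) : (u : I ≃ₜ I) 0 = 0 := by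
  set y := (u : I ≃ₜ I).symm 0 with hy
  have h0y : (0:I) ≤ y := Subtype.coe_le_coe.mp (by simpa using y.2.1)
  have h1 : (u : I ≃ₜ I) 0 ≤ (u : I ≃ₜ I) y := u.2 h0y
  rw [hy, (u : I ≃ₜ I).apply_symm_apply] at h1
  exact le_antisymm h1 (Subtype.coe_le_coe.mp (by simpa using ((u : I ≃ₜ I) 0).2.1))

lemma apply_one (u : HomeoPlusI) : (u : I ≃ₜ I) 1 = 1 := by
  set y := (u : I ≃ₜ I).symm 1 with hy
  have h0y : y ≤ (1:I) := Subtype.coe_le_coe.mp (by simpa using y.2.2)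
  have h1 : (u : I ≃ₜ I) y ≤ (u : I ≃ₜ I) 1 := u.2 h0y
  rw [hy, (u : I ≃ₜ I).apply_symm_apply] at h1
  exact le_antisymm (Subtype.coe_le_coe.mp (by simpa using ((u : I ≃ₜ I) 1).2.2)) h1

lemma apply_pos (u : HomeoPlusI) {x : I} (hx : 0 < (x:ℝ)) :
    0 < (((u : I ≃ₜ I) x : I) : ℝ) := by
  have h : (0:I) < x := Subtype.coe_lt_coe.mp (by simpa using hx)
  have := coe_strictMono u h
  rw [apply_zero u] at this
  simpa using Subtype.coe_lt_coe.mpr this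

lemma apply_lt_one (u : HomeoPlusI) {x : I} (hx : (x:ℝ) < 1) :
    (((u : I ≃ₜ I) x : I) : ℝ) < 1 := by
  have h : x < (1:I) := Subtype.coe_lt_coe.mp (by simpa using hx)
  have := coe_strictMono u h
  rw [apply_one u] at this
  simpa using Subtype.coe_lt_coe.mpr this

lemma continuous_evalH (x : I) :
    Continuous (fun u : HomeoPlusI => ((u : I ≃ₜ I) x : I)) := by
  have h1 : Continuous (fun u : HomeoPlusI => (u : I ≃ₜ I)) := continuous_subtype_val
  have h2 : Continuous (fun f : I ≃ₜ I => (⟨⇑f, f.continuous⟩ : C(I,I))) :=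
    continuous_induced_dom
  exact (continuous_eval_const x :
    Continuous fun f : C(I,I) => f x).comp (h2.comp h1)

lemma continuous_evalHR (x : I) :
    Continuous (fun u : HomeoPlusI => (((u : I ≃ₜ I) x : I) : ℝ)) :=
  continuous_subtype_val.comp (continuous_evalH x)

lemma measSet_le (x : I) (c : ℝ) :
    MeasurableSet {u : HomeoPlusI | (((u : I ≃ₜ I) x : I) : ℝ) ≤ c} :=
  measurableSet_le (continuous_evalHR x).measurable measurable_const

lemma measSet_ge (x : I) (c : ℝ) :
    MeasurableSet {u : HomeoPlusI | c ≤ (((u : I ≃ₜ I) x : I) : ℝ)} :=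
  measurableSet_le measurable_const (continuous_evalHR x).measurable

variable (μ : Measure HomeoPlusI) [IsProbabilityMeasure μ]

lemma compl_small {S : ℕ → Set HomeoPlusI} (hmeas : ∀ k, MeasurableSet (S k))
    (hmono : Monotone S) (hcov : ∀ u, ∃ k, u ∈ S k) {η : ℝ≥0∞} (hη : 0 < η) :
    ∃ k, μ (S k)ᶜ ≤ η := by
  rcases le_or_gt 1 η with h1 | h1
  · exact ⟨0, le_trans prob_le_one h1⟩
  have hU : μ (⋃ k, S k) = ⨆ k, μ (S k) :=
    (hmono.directed_le).measure_iUnion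
  have hUuniv : (⋃ k, S k) = univ := by
    ext u; simp only [mem_iUnion, mem_univ, iff_true]; exact hcov u
  have h1' : (1 : ℝ≥0∞) - η < ⨆ k, μ (S k) := by
    rw [← hU, hUuniv, measure_univ]
    exact ENNReal.sub_lt_self ENNReal.one_ne_top one_ne_zero hη.ne'
  obtain ⟨k, hk⟩ := lt_iSup_iff.mp h1'
  refine ⟨k, ?_⟩
  have hc : μ (S k)ᶜ = 1 - μ (S k) := by
    rw [measure_compl (hmeas k) (measure_ne_top μ _), measure_univ]
  rw [hc]
  calc (1:ℝ≥0∞) - μ (S k) ≤ 1 - (1 - η) := by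
        exact tsub_le_tsub_left hk.le 1
    _ ≤ η := by
        rw [ENNReal.sub_sub_cancel ENNReal.one_ne_top h1.le]

/-- One can find an arbitrarily small point `a` where, except on a set of measure `≤ η`,
all homeomorphisms take value at most `δ`. -/
lemma exists_point_small (δ b : ℝ) (hδ : 0 < δ) (hδ1 : δ ≤ 1) (hb : 0 < b)
    {η : ℝ≥0∞} (hη : 0 < η) :
    ∃ a : ℝ, 0 < a ∧ a < b ∧
      μ {u : HomeoPlusI | (((u : I ≃ₜ I) (cl a) : I) : ℝ) ≤ δ}ᶜ ≤ η := by
  set b' := min b 1 with hb'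
  have hb'0 : 0 < b' := lt_min hb one_pos
  have hb'1 : b' ≤ 1 := min_le_right _ _
  set a : ℕ → ℝ := fun k => b' * (2⁻¹:ℝ)^(k+1) with ha
  have ha0 : ∀ k, 0 < a k := fun k => mul_pos hb'0 (by positivity)
  have ha1 : ∀ k, a k < b' := fun k => by
    have : (2⁻¹:ℝ)^(k+1) < 1 := by
      apply pow_lt_one₀ (by norm_num) (by norm_num); omega
    calc a k < b' * 1 := by
          rw [ha]; exact (mul_lt_mul_iff_right₀ hb'0).mpr this
      _ = b' := mul_one _
  have hanti : StrictAnti a := fun m n hmn => by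
    apply (mul_lt_mul_iff_right₀ hb'0).mpr
    exact pow_lt_pow_right_of_lt_one₀ (by norm_num) (by norm_num) (by omega)
  set S : ℕ → Set HomeoPlusI :=
    fun k => {u : HomeoPlusI | (((u : I ≃ₜ I) (cl (a k)) : I) : ℝ) ≤ δ} with hS
  have hmeas : ∀ k, MeasurableSet (S k) := fun k => measSet_le _ _
  have hmono : Monotone S := by
    intro m n hmn u hu
    have hle : cl (a n) ≤ cl (a m) := by
      apply Subtype.coe_le_coe.mp
      rw [cl_coe (ha0 n).le (le_trans (ha1 n).le hb'1),
        cl_coe (ha0 m).le (le_trans (ha1 m).le hb'1)]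
      exact (hanti.antitone hmn)
    exact le_trans (Subtype.coe_le_coe.mpr (u.2 hle)) hu
  have hcov : ∀ u, ∃ k, u ∈ S k := by
    intro u
    set y := ((u : I ≃ₜ I).symm (cl δ)) with hy
    have hy0 : 0 < (y:ℝ) := by
      rcases lt_or_ge 0 (y:ℝ) with h | h
      · exact h
      · exfalso
        have hy00 : y = (0:I) := le_antisymm (Subtype.coe_le_coe.mp (by simpa using h)) (Subtype.coe_le_coe.mp (by simpa using y.2.1))
        have : (u : I ≃ₜ I) y = 0 := by rw [hy00]; exact apply_zero u
        rw [hy, (u : I ≃ₜ I).apply_symm_apply] at this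
        have := congrArg (fun z : I => (z:ℝ)) this
        rw [cl_coe hδ.le hδ1] at this
        simpa [this] using hδ
    obtain ⟨k, hk⟩ := exists_pow_lt_of_lt_one hy0 (by norm_num : (2⁻¹:ℝ) < 1)
    refine ⟨k, ?_⟩
    have hak : a k ≤ (y:ℝ) := by
      calc a k = b' * (2⁻¹:ℝ)^(k+1) := rfl
        _ ≤ 1 * (2⁻¹:ℝ)^(k+1) := by
            apply mul_le_mul_of_nonneg_right hb'1 (by positivity)
        _ ≤ (2⁻¹:ℝ)^k := by
            rw [one_mul, pow_succ]
            nlinarith [pow_pos (by norm_num : (0:ℝ) < 2⁻¹) k]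
        _ ≤ (y:ℝ) := hk.le
    have hcle : cl (a k) ≤ y := by
      apply Subtype.coe_le_coe.mp
      rw [cl_coe (ha0 k).le (le_trans (le_trans (ha1 k).le hb'1) le_rfl)]
      exact hak
    have := u.2 hcle
    rw [hy, (u : I ≃ₜ I).apply_symm_apply] at this
    have := Subtype.coe_le_coe.mpr this
    simp only [hS, mem_setOf_eq]
    calc (((u : I ≃ₜ I) (cl (a k)) : I) : ℝ) ≤ (cl δ : ℝ) := this
      _ = δ := cl_coe hδ.le hδ1
  obtain ⟨k, hk⟩ := compl_small μ hmeas hmono hcov hη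
  exact ⟨a k, ha0 k, lt_of_lt_of_le (ha1 k) (min_le_left _ _), hk⟩

/-- One can find an arbitrarily small positive value `ε` such that, except on a set of
measure `≤ η`, all homeomorphisms take value at least `ε` at a given positive point. -/
lemma exists_value_small (b cap : ℝ) (hb0 : 0 < b) (hb1 : b < 1) (hcap : 0 < cap)
    {η : ℝ≥0∞} (hη : 0 < η) :
    ∃ ε : ℝ, 0 < ε ∧ ε ≤ cap ∧
      μ {u : HomeoPlusI | ε ≤ (((u : I ≃ₜ I) (cl b) : I) : ℝ)}ᶜ ≤ η := by
  set cap' := min cap 1 with hcap'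
  have hcap'0 : 0 < cap' := lt_min hcap one_pos
  set e : ℕ → ℝ := fun k => cap' * (2⁻¹:ℝ)^(k+1) with he
  have he0 : ∀ k, 0 < e k := fun k => by positivity
  have heanti : Antitone e := fun m n hmn => by
    apply mul_le_mul_of_nonneg_left _ hcap'0.le
    apply pow_le_pow_of_le_one (by norm_num) (by norm_num) (by omega)
  set T : ℕ → Set HomeoPlusI :=
    fun k => {u : HomeoPlusI | e k ≤ (((u : I ≃ₜ I) (cl b) : I) : ℝ)} with hT
  have hmeas : ∀ k, MeasurableSet (T k) := fun k => measSet_ge _ _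
  have hmono : Monotone T := fun m n hmn u hu => le_trans (heanti hmn) hu
  have hcov : ∀ u, ∃ k, u ∈ T k := by
    intro u
    have hv : 0 < (((u : I ≃ₜ I) (cl b) : I) : ℝ) := by
      apply apply_pos
      rw [cl_coe hb0.le hb1.le]; exact hb0
    obtain ⟨k, hk⟩ := exists_pow_lt_of_lt_one hv (by norm_num : (2⁻¹:ℝ) < 1)
    refine ⟨k, ?_⟩
    have : e k ≤ (2⁻¹:ℝ)^k := by
      calc e k ≤ 1 * (2⁻¹:ℝ)^(k+1) :=
            mul_le_mul_of_nonneg_right (min_le_right _ _) (by positivity)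
        _ ≤ (2⁻¹:ℝ)^k := by
            rw [one_mul, pow_succ]
            nlinarith [pow_pos (by norm_num : (0:ℝ) < 2⁻¹) k]
    exact le_trans this hk.le
  obtain ⟨k, hk⟩ := compl_small μ hmeas hmono hcov hη
  refine ⟨e k, he0 k, ?_, hk⟩
  calc e k ≤ cap' * 1 := by
        apply mul_le_mul_of_nonneg_left _ hcap'0.le
        apply pow_le_one₀ (by norm_num) (by norm_num)
    _ = cap' := mul_one _
    _ ≤ cap := min_le_left _ _

/-- One can find a bound `γ < 1`, above any given `lo < 1`, such that except on a set of
measure `≤ η` all homeomorphisms take value at most `γ` at a given point `x < 1`. -/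
lemma exists_bound_large (x lo : ℝ) (hx0 : 0 < x) (hx1 : x < 1) (hlo : lo < 1)
    {η : ℝ≥0∞} (hη : 0 < η) :
    ∃ γ : ℝ, lo < γ ∧ γ < 1 ∧
      μ {u : HomeoPlusI | (((u : I ≃ₜ I) (cl x) : I) : ℝ) ≤ γ}ᶜ ≤ η := by
  set c : ℕ → ℝ := fun k => 1 - (2⁻¹:ℝ)^(k+1) with hc
  have hcmono : Monotone c := fun m n hmn => by
    simp only [hc]
    have : (2⁻¹:ℝ)^(n+1) ≤ (2⁻¹:ℝ)^(m+1) :=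
      pow_le_pow_of_le_one (by norm_num) (by norm_num) (by omega)
    linarith
  set U : ℕ → Set HomeoPlusI :=
    fun k => {u : HomeoPlusI | (((u : I ≃ₜ I) (cl x) : I) : ℝ) ≤ c k} with hU
  have hmeas : ∀ k, MeasurableSet (U k) := fun k => measSet_le _ _
  have hmono : Monotone U := fun m n hmn u hu => le_trans hu (hcmono hmn)
  have hcov : ∀ u, ∃ k, u ∈ U k := by
    intro u
    have hv : (((u : I ≃ₜ I) (cl x) : I) : ℝ) < 1 := by
      apply apply_lt_one
      rw [cl_coe hx0.le hx1.le]; exact hx1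
    obtain ⟨k, hk⟩ := exists_pow_lt_of_lt_one (by linarith : (0:ℝ) < 1 - (((u : I ≃ₜ I) (cl x) : I) : ℝ))
      (by norm_num : (2⁻¹:ℝ) < 1)
    refine ⟨k, ?_⟩
    have : (2⁻¹:ℝ)^(k+1) ≤ (2⁻¹:ℝ)^k :=
      pow_le_pow_of_le_one (by norm_num) (by norm_num) (by omega)
    simp only [hU, mem_setOf_eq, hc]
    linarith
  obtain ⟨k₁, hk₁⟩ := compl_small μ hmeas hmono hcov hη
  obtain ⟨k₂, hk₂⟩ := exists_pow_lt_of_lt_one (by linarith : (0:ℝ) < 1 - lo)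
    (by norm_num : (2⁻¹:ℝ) < 1)
  refine ⟨c (max k₁ k₂), ?_, ?_, ?_⟩
  · have h1 : (2⁻¹:ℝ)^(max k₁ k₂ + 1) ≤ (2⁻¹:ℝ)^k₂ :=
      pow_le_pow_of_le_one (by norm_num) (by norm_num) (by omega)
    simp only [hc]; linarith
  · simp only [hc]
    have : (0:ℝ) < (2⁻¹:ℝ)^(max k₁ k₂ + 1) := by positivity
    linarith
  · calc μ (U (max k₁ k₂))ᶜ ≤ μ (U k₁)ᶜ := by
          apply measure_mono
          exact compl_subset_compl.mpr (hmono (le_max_left _ _))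
      _ ≤ η := hk₁

end Meas

section NotNull

lemma not_isHaarNull_of (A : Set HomeoPlusI)
    (H : ∀ μ : Measure HomeoPlusI, IsProbabilityMeasure μ →
      ∃ (g h : HomeoPlusI) (E : Set HomeoPlusI), 0 < μ E ∧ ∀ u ∈ E, g * u * h ∈ A) :
    ¬ IsHaarNull A := by
  rintro ⟨B, hAB, _hBmeas, μ, hμ, hnull⟩
  obtain ⟨g, h, E, hE, hEA⟩ := H μ hμ
  have hsub : E ⊆ (fun b => g⁻¹ * b * h⁻¹) '' B := by
    intro u hu
    refine ⟨g * u * h, hAB (hEA u hu), ?_⟩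
    show g⁻¹ * (g * u * h) * h⁻¹ = u
    group
  have := hnull g⁻¹ h⁻¹
  exact absurd (le_trans (measure_mono hsub) this.le) (not_le.2 hE)

end NotNull

section QE

variable (q : HomeoPlusI)

def qe (x : ℝ) : ℝ := (((q : I ≃ₜ I) (cl x) : I) : ℝ)

lemma qe_lt_qe {x y : ℝ} (h0 : 0 ≤ x) (hxy : x < y) (h1 : y ≤ 1) : qe q x < qe q y := by
  have hcl : cl x < cl y := by
    apply Subtype.coe_lt_coe.mp
    rw [cl_coe h0 (by linarith), cl_coe (by linarith) h1]
    exact hxy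
  exact Subtype.coe_lt_coe.mpr (coe_strictMono q hcl)

lemma qe_pos {x : ℝ} (h0 : 0 < x) (h1 : x ≤ 1) : 0 < qe q x := by
  apply apply_pos; rw [cl_coe h0.le h1]; exact h0

lemma qe_lt_one {x : ℝ} (h0 : 0 ≤ x) (h1 : x < 1) : qe q x < 1 := by
  apply apply_lt_one; rw [cl_coe h0 h1.le]; exact h1

lemma qe_small (t : ℝ) (ht : 0 < t) :
    ∃ δ, 0 < δ ∧ ∀ x, 0 < x → x < δ → qe q x < t := by
  rcases le_or_gt 1 t with h1 | h1
  · exact ⟨1, one_pos, fun x hx0 hx1 => lt_of_lt_of_le (qe_lt_one q hx0.le hx1) h1⟩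
  · set y := ((q : I ≃ₜ I).symm (cl t)) with hy
    have hy0 : 0 < (y:ℝ) := by
      rcases lt_or_ge 0 (y:ℝ) with h | h
      · exact h
      · exfalso
        have hy00 : y = (0:I) := le_antisymm
          (Subtype.coe_le_coe.mp (by simpa using h))
          (Subtype.coe_le_coe.mp (by simpa using y.2.1))
        have h2 : (q : I ≃ₜ I) y = 0 := by rw [hy00]; exact apply_zero q
        rw [hy, (q : I ≃ₜ I).apply_symm_apply] at h2
        have h3 := congrArg (fun z : I => (z:ℝ)) h2
        rw [cl_coe ht.le h1.le] at h3
        simpa [h3] using ht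
    refine ⟨(y:ℝ), hy0, fun x hx0 hxy => ?_⟩
    have hcl : cl x < y := by
      apply Subtype.coe_lt_coe.mp
      rw [cl_coe hx0.le (le_trans hxy.le y.2.2)]
      exact hxy
    have := coe_strictMono q hcl
    rw [hy, (q : I ≃ₜ I).apply_symm_apply] at this
    have := Subtype.coe_lt_coe.mpr this
    rw [cl_coe ht.le h1.le] at this
    exact this

lemma qe_big (t : ℝ) (ht : t < 1) :
    ∃ δ, δ < 1 ∧ ∀ x, δ < x → x ≤ 1 → t < qe q x := by
  rcases le_or_gt t 0 with h0 | h0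
  · refine ⟨0, one_pos, fun x hx0 hx1 => lt_of_le_of_lt h0 (qe_pos q hx0 hx1)⟩
  · set y := ((q : I ≃ₜ I).symm (cl t)) with hy
    have hy1 : (y:ℝ) < 1 := by
      rcases lt_or_ge (y:ℝ) 1 with h | h
      · exact h
      · exfalso
        have hy11 : y = (1:I) := le_antisymm
          (Subtype.coe_le_coe.mp (by simpa using y.2.2))
          (Subtype.coe_le_coe.mp (by simpa using h))
        have h2 : (q : I ≃ₜ I) y = 1 := by rw [hy11]; exact apply_one q
        rw [hy, (q : I ≃ₜ I).apply_symm_apply] at h2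
        have h3 := congrArg (fun z : I => (z:ℝ)) h2
        rw [cl_coe h0.le ht.le] at h3
        simpa [h3] using ht
    refine ⟨(y:ℝ), hy1, fun x hxy hx1 => ?_⟩
    have hcl : y < cl x := by
      apply Subtype.coe_lt_coe.mp
      rw [cl_coe (le_trans y.2.1 hxy.le) hx1]
      exact hxy
    have := coe_strictMono q hcl
    rw [hy, (q : I ≃ₜ I).apply_symm_apply] at this
    have := Subtype.coe_lt_coe.mpr this
    rw [cl_coe h0.le ht.le] at this
    exact this

end QE

section Part2

variable (q : HomeoPlusI) (μ : Measure HomeoPlusI) [IsProbabilityMeasure μ]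

lemma half_pow_pos (n : ℕ) : (0:ℝ≥0∞) < (2⁻¹:ℝ≥0∞)^n :=
  ENNReal.pow_pos (ENNReal.inv_pos.mpr (by norm_num)) n

/-- Property of the `n`-th left point for Part 2. -/
def P2L (n : ℕ) (x : ℝ) : Prop :=
  0 < x ∧ x ≤ (2⁻¹:ℝ)^(n+1) ∧
    μ {u : HomeoPlusI | (((u : I ≃ₜ I) (cl x) : I) : ℝ) ≤ (2⁻¹:ℝ)^(n+2)}ᶜ
      ≤ (2⁻¹:ℝ≥0∞)^(n+3)

lemma step2L (n : ℕ) (b : ℝ) (hb : 0 < b) : ∃ x, P2L μ n x ∧ x < b := by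
  obtain ⟨a, ha0, hab, hmeas⟩ := exists_point_small μ ((2⁻¹:ℝ)^(n+2))
    (min b ((2⁻¹:ℝ)^(n+1))) (by positivity)
    (pow_le_one₀ (by norm_num) (by norm_num))
    (lt_min hb (by positivity)) (half_pow_pos (n+3))
  exact ⟨a, ⟨ha0, le_of_lt (lt_of_lt_of_le hab (min_le_right _ _)), hmeas⟩,
    lt_of_lt_of_le hab (min_le_left _ _)⟩

def eL : ℕ → ℝ := fun n => Nat.rec ((step2L μ 0 1 one_pos).choose)
  (fun m prev => if hb : 0 < prev then (step2L μ (m+1) prev hb).choose else 1) n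

lemma eL_spec : ∀ n, P2L μ n (eL μ n) ∧ eL μ (n+1) < eL μ n := by
  have h0 : P2L μ 0 (eL μ 0) := (step2L μ 0 1 one_pos).choose_spec.1
  intro n
  induction n with
  | zero =>
      refine ⟨h0, ?_⟩
      show (if hb : 0 < eL μ 0 then (step2L μ 1 (eL μ 0) hb).choose else 1) < eL μ 0
      rw [dif_pos h0.1]
      exact (step2L μ 1 (eL μ 0) h0.1).choose_spec.2
  | succ m ih =>
      have hpos : 0 < eL μ (m+1) := by
        have : eL μ (m+1) = if hb : 0 < eL μ m then (step2L μ (m+1) (eL μ m) hb).choose else 1 := rfl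
        rw [this, dif_pos ih.1.1]
        exact (step2L μ (m+1) (eL μ m) ih.1.1).choose_spec.1.1
      have hP : P2L μ (m+1) (eL μ (m+1)) := by
        have : eL μ (m+1) = if hb : 0 < eL μ m then (step2L μ (m+1) (eL μ m) hb).choose else 1 := rfl
        rw [this, dif_pos ih.1.1]
        exact (step2L μ (m+1) (eL μ m) ih.1.1).choose_spec.1
      refine ⟨hP, ?_⟩
      show (if hb : 0 < eL μ (m+1) then (step2L μ (m+2) (eL μ (m+1)) hb).choose else 1) < eL μ (m+1)
      rw [dif_pos hpos]
      exact (step2L μ (m+2) (eL μ (m+1)) hpos).choose_spec.2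

lemma eL_pos (n : ℕ) : 0 < eL μ n := (eL_spec μ n).1.1
lemma eL_le (n : ℕ) : eL μ n ≤ (2⁻¹:ℝ)^(n+1) := (eL_spec μ n).1.2.1
lemma eL_anti : StrictAnti (eL μ) := strictAnti_nat_of_succ_lt (fun n => (eL_spec μ n).2)
lemma eL_lt_one (n : ℕ) : eL μ n < 1 :=
  lt_of_le_of_lt (eL_le μ n) (pow_lt_one₀ (by norm_num) (by norm_num) (by omega))
lemma eL_meas (n : ℕ) :
    μ {u : HomeoPlusI | (((u : I ≃ₜ I) (cl (eL μ n)) : I) : ℝ) ≤ (2⁻¹:ℝ)^(n+2)}ᶜ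
      ≤ (2⁻¹:ℝ≥0∞)^(n+3) := (eL_spec μ n).1.2.2

def eR : ℕ → ℝ := fun k => 1 - (1 - eL μ 0) * (2⁻¹:ℝ)^k

lemma eR_zero : eR μ 0 = eL μ 0 := by simp [eR]

lemma eR_mono : StrictMono (eR μ) := by
  have h1 : 0 < 1 - eL μ 0 := by linarith [eL_lt_one μ 0]
  intro m n hmn
  have : (2⁻¹:ℝ)^n < (2⁻¹:ℝ)^m :=
    pow_lt_pow_right_of_lt_one₀ (by norm_num) (by norm_num) hmn
  simp only [eR]
  nlinarith

lemma eR_lt_one (k : ℕ) : eR μ k < 1 := by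
  have h1 : 0 < 1 - eL μ 0 := by linarith [eL_lt_one μ 0]
  have : (0:ℝ) < (2⁻¹:ℝ)^k := by positivity
  simp only [eR]; nlinarith

lemma eR_pos (k : ℕ) : 0 < eR μ k := by
  rcases Nat.eq_zero_or_pos k with rfl | hk
  · rw [eR_zero]; exact eL_pos μ 0
  · exact lt_trans (show (0:ℝ) < eR μ 0 by rw [eR_zero μ]; exact eL_pos μ 0) (eR_mono μ hk)

lemma eR_big (t : ℝ) (ht : t < 1) : ∃ k, t < eR μ k := by
  have h1 : 0 < 1 - eL μ 0 := by linarith [eL_lt_one μ 0]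
  obtain ⟨k, hk⟩ := exists_pow_lt_of_lt_one
    (div_pos (show (0:ℝ) < 1 - t by linarith) h1) (by norm_num : (2⁻¹:ℝ) < 1)
  refine ⟨k, ?_⟩
  rw [lt_div_iff₀ h1] at hk
  simp only [eR]
  nlinarith

/-- Left points of Part 2, as `SideData`. -/
def deP2 : SideData where
  A := eL μ
  R := eR μ
  hA := eL_anti μ
  hR := eR_mono μ
  hAR := (eR_zero μ).symm
  hApos := eL_pos μ
  hR1 := eR_lt_one μ
  hAsmall := fun t ht => by
    obtain ⟨n, hn⟩ := exists_pow_lt_of_lt_one ht (by norm_num : (2⁻¹:ℝ) < 1)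
    exact ⟨n, lt_of_le_of_lt (le_trans (eL_le μ n)
      (pow_le_pow_of_le_one (by norm_num) (by norm_num) (by omega))) hn⟩
  hRbig := eR_big μ

/-- Property of the `k`-th right bound for Part 2. -/
def P2R' (k : ℕ) (γ : ℝ) : Prop :=
  γ < 1 ∧ 1 - (2⁻¹:ℝ)^(k+1) ≤ γ ∧
    μ {u : HomeoPlusI | (((u : I ≃ₜ I) (cl (eR μ k)) : I) : ℝ) ≤ γ}ᶜ ≤ (2⁻¹:ℝ≥0∞)^(k+3)

lemma step2R (k : ℕ) (prev : ℝ) (hprev : prev < 1) : ∃ γ, P2R' μ k γ ∧ prev < γ := by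
  have hlo : max prev (1 - (2⁻¹:ℝ)^(k+1)) < 1 := by
    apply max_lt hprev
    have : (0:ℝ) < (2⁻¹:ℝ)^(k+1) := by positivity
    linarith
  obtain ⟨γ, hγlo, hγ1, hγm⟩ := exists_bound_large μ (eR μ k) (max prev (1 - (2⁻¹:ℝ)^(k+1)))
    (eR_pos μ k) (eR_lt_one μ k) hlo (half_pow_pos (k+3))
  exact ⟨γ, ⟨hγ1, le_of_lt (lt_of_le_of_lt (le_max_right _ _) hγlo), hγm⟩,
    lt_of_le_of_lt (le_max_left _ _) hγlo⟩

def gR' : ℕ → ℝ := fun n => Nat.rec ((2⁻¹:ℝ)^2)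
  (fun k prev => if h : prev < 1 then (step2R μ (k+1) prev h).choose else 1) n

lemma gR'_zero : gR' μ 0 = (2⁻¹:ℝ)^2 := rfl

lemma gR'_spec : ∀ k, gR' μ k < 1 ∧ (P2R' μ (k+1) (gR' μ (k+1)) ∧ gR' μ k < gR' μ (k+1)) := by
  intro k
  induction k with
  | zero =>
      have h1 : gR' μ 0 < 1 := by rw [gR'_zero]; norm_num
      have hdef : gR' μ 1 = if h : gR' μ 0 < 1 then (step2R μ 1 (gR' μ 0) h).choose else 1 := rfl
      refine ⟨h1, ?_⟩
      rw [hdef, dif_pos h1]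
      exact (step2R μ 1 (gR' μ 0) h1).choose_spec
  | succ m ih =>
      have h1 : gR' μ (m+1) < 1 := ih.2.1.1
      have hdef : gR' μ (m+2) =
        if h : gR' μ (m+1) < 1 then (step2R μ (m+2) (gR' μ (m+1)) h).choose else 1 := rfl
      refine ⟨h1, ?_⟩
      rw [hdef, dif_pos h1]
      exact (step2R μ (m+2) (gR' μ (m+1)) h1).choose_spec

lemma gR'_lt_one (k : ℕ) : gR' μ k < 1 := (gR'_spec μ k).1
lemma gR'_mono : StrictMono (gR' μ) :=
  strictMono_nat_of_lt_succ (fun n => (gR'_spec μ n).2.2)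
lemma gR'_ge (k : ℕ) : 1 - (2⁻¹:ℝ)^(k+2) ≤ gR' μ (k+1) := (gR'_spec μ k).2.1.2.1
lemma gR'_meas (k : ℕ) :
    μ {u : HomeoPlusI | (((u : I ≃ₜ I) (cl (eR μ (k+1))) : I) : ℝ) ≤ gR' μ (k+1)}ᶜ
      ≤ (2⁻¹:ℝ≥0∞)^(k+4) := (gR'_spec μ k).2.1.2.2
lemma gR'_pos (k : ℕ) : 0 < gR' μ k := by
  rcases Nat.eq_zero_or_pos k with rfl | hk
  · rw [gR'_zero]; norm_num
  · calc (0:ℝ) < (2⁻¹:ℝ)^2 := by norm_num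
      _ = gR' μ 0 := (gR'_zero μ).symm
      _ < gR' μ k := gR'_mono μ hk

/-- x-data of `g` for Part 2: the constraint bounds `γ`. -/
def dgP2 : SideData where
  A := fun n => (2⁻¹:ℝ)^(n+2)
  R := gR' μ
  hA := fun m n hmn => pow_lt_pow_right_of_lt_one₀ (by norm_num) (by norm_num) (by omega)
  hR := gR'_mono μ
  hAR := (gR'_zero μ).symm
  hApos := fun n => by positivity
  hR1 := gR'_lt_one μ
  hAsmall := fun t ht => by
    obtain ⟨n, hn⟩ := exists_pow_lt_of_lt_one ht (by norm_num : (2⁻¹:ℝ) < 1)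
    exact ⟨n, lt_of_le_of_lt (pow_le_pow_of_le_one (by norm_num) (by norm_num) (by omega)) hn⟩
  hRbig := fun t ht => by
    obtain ⟨k, hk⟩ := exists_pow_lt_of_lt_one (show (0:ℝ) < 1 - t by linarith)
      (by norm_num : (2⁻¹:ℝ) < 1)
    refine ⟨k+1, lt_of_lt_of_le ?_ (gR'_ge μ k)⟩
    have : (2⁻¹:ℝ)^(k+2) ≤ (2⁻¹:ℝ)^k :=
      pow_le_pow_of_le_one (by norm_num) (by norm_num) (by omega)
    linarith

/-- y-data of `g` for Part 2: values `q(e_{k-2})`. -/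
def dvP2 : SideData where
  A := fun m => qe q (eL μ (m+2))
  R := fun m => match m with
    | 0 => qe q (eL μ 2)
    | 1 => qe q (eL μ 1)
    | (m+2) => qe q (eR μ m)
  hA := fun m n hmn => qe_lt_qe q (eL_pos μ _).le (eL_anti μ (by omega)) (eL_lt_one μ _).le
  hR := by
    apply strictMono_nat_of_lt_succ
    intro n
    match n with
    | 0 => exact qe_lt_qe q (eL_pos μ 2).le (eL_anti μ (by omega)) (eL_lt_one μ 1).le
    | 1 => exact qe_lt_qe q (eL_pos μ 1).le (by rw [eR_zero]; exact eL_anti μ (by omega)) (eR_lt_one μ 0).le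
    | (m+2) => exact qe_lt_qe q (eR_pos μ m).le (eR_mono μ (by omega)) (eR_lt_one μ (m+1)).le
  hAR := rfl
  hApos := fun n => qe_pos q (eL_pos μ _) (eL_lt_one μ _).le
  hR1 := fun n => by
    match n with
    | 0 => exact qe_lt_one q (eL_pos μ 2).le (eL_lt_one μ 2)
    | 1 => exact qe_lt_one q (eL_pos μ 1).le (eL_lt_one μ 1)
    | (m+2) => exact qe_lt_one q (eR_pos μ m).le (eR_lt_one μ m)
  hAsmall := fun t ht => by
    obtain ⟨δ, hδ0, hδ⟩ := qe_small q t ht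
    obtain ⟨n, hn⟩ := (deP2 μ).hAsmall δ hδ0
    exact ⟨n, hδ _ (eL_pos μ (n+2)) (lt_of_le_of_lt (le_of_lt (eL_anti μ (by omega))) hn)⟩
  hRbig := fun t ht => by
    obtain ⟨δ, hδ1, hδ⟩ := qe_big q t ht
    obtain ⟨k, hk⟩ := eR_big μ δ hδ1
    exact ⟨k+2, hδ _ hk (eR_lt_one μ k).le⟩

/-- The key index shift: the value data at `k` is `q` evaluated at the point data at `k-2`. -/
lemma dvP2_eq (k : ℤ) : (dvP2 q μ).X k = qe q ((deP2 μ).X (k-2)) := by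
  rcases le_or_gt k 0 with hk | hk
  · have hk2 : k - 2 ≤ 0 := by omega
    simp only [SideData.X, dvP2, deP2, if_pos hk, if_pos hk2]
    congr 2
    omega
  · rcases lt_or_ge k 3 with hk3 | hk3
    · interval_cases k
      · -- k = 1
        show (dvP2 q μ).X 1 = qe q ((deP2 μ).X (1-2))
        have h1 : ¬ ((1:ℤ) ≤ 0) := by omega
        have h2 : (1:ℤ) - 2 ≤ 0 := by omega
        rw [SideData.X, SideData.X, if_neg h1, if_pos h2]
        show qe q (eL μ 1) = qe q (eL μ (-(1-2:ℤ)).toNat)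
        norm_num
      · -- k = 2
        show (dvP2 q μ).X 2 = qe q ((deP2 μ).X (2-2))
        have h1 : ¬ ((2:ℤ) ≤ 0) := by omega
        have h2 : (2:ℤ) - 2 ≤ 0 := by omega
        rw [SideData.X, SideData.X, if_neg h1, if_pos h2]
        show qe q (eR μ 0) = qe q (eL μ (-(2-2:ℤ)).toNat)
        norm_num
        rw [eR_zero μ]
    · have h1 : ¬ (k ≤ 0) := by omega
      have h2 : ¬ (k - 2 ≤ 0) := by omega
      simp only [SideData.X, dvP2, deP2, if_neg h1, if_neg h2]
      have htn : k.toNat = (k-2).toNat + 2 := by omega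
      rw [htn]

end Part2

section Part2Main

variable (q : HomeoPlusI) (μ : Measure HomeoPlusI) [IsProbabilityMeasure μ]

lemma geom_tail (c : ℕ) : (∑' n : ℕ, (2⁻¹:ℝ≥0∞)^(n+c)) = (2⁻¹:ℝ≥0∞)^c * 2 := by
  have h : ∀ n : ℕ, (2⁻¹:ℝ≥0∞)^(n+c) = (2⁻¹:ℝ≥0∞)^c * (2⁻¹)^n := fun n => by
    rw [pow_add]; ring
  rw [tsum_congr h, ENNReal.tsum_mul_left, ENNReal.tsum_geometric]
  congr 1
  rw [ENNReal.one_sub_inv_two]; exact inv_inv (2:ℝ≥0∞)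

def EP2 : Set HomeoPlusI :=
  (⋂ n : ℕ, {u : HomeoPlusI | (((u : I ≃ₜ I) (cl (eL μ n)) : I) : ℝ) ≤ (2⁻¹:ℝ)^(n+2)}) ∩
  (⋂ n : ℕ, {u : HomeoPlusI | (((u : I ≃ₜ I) (cl (eR μ (n+1))) : I) : ℝ) ≤ gR' μ (n+1)})

lemma EP2_pos : 0 < μ (EP2 μ) := by
  have hc : μ (EP2 μ)ᶜ ≤ 2⁻¹ := by
    have hsub : (EP2 μ)ᶜ ⊆
        (⋃ n : ℕ, {u : HomeoPlusI | (((u : I ≃ₜ I) (cl (eL μ n)) : I) : ℝ) ≤ (2⁻¹:ℝ)^(n+2)}ᶜ) ∪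
        (⋃ n : ℕ, {u : HomeoPlusI | (((u : I ≃ₜ I) (cl (eR μ (n+1))) : I) : ℝ) ≤ gR' μ (n+1)}ᶜ) := by
      intro u hu
      simp only [EP2, compl_inter, mem_union, mem_compl_iff, mem_iInter, not_forall] at hu
      rcases hu with ⟨n, hn⟩ | ⟨n, hn⟩
      · exact Or.inl (mem_iUnion.mpr ⟨n, hn⟩)
      · exact Or.inr (mem_iUnion.mpr ⟨n, hn⟩)
    calc μ (EP2 μ)ᶜ ≤ _ := measure_mono hsub
      _ ≤ (∑' n : ℕ, (2⁻¹:ℝ≥0∞)^(n+3)) + (∑' n : ℕ, (2⁻¹:ℝ≥0∞)^(n+4)) := by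
          apply le_trans (measure_union_le _ _)
          apply add_le_add
          · exact le_trans (measure_iUnion_le _) (ENNReal.tsum_le_tsum (fun n => eL_meas μ n))
          · exact le_trans (measure_iUnion_le _) (ENNReal.tsum_le_tsum (fun n => gR'_meas μ n))
      _ = (2⁻¹:ℝ≥0∞)^3*2 + (2⁻¹:ℝ≥0∞)^4*2 := by rw [geom_tail, geom_tail]
      _ ≤ 2⁻¹ := by
          have h2 : ((2:ℝ≥0∞))⁻¹ = ENNReal.ofReal (1/2) := by
            rw [ENNReal.ofReal_div_of_pos] <;> norm_num
          rw [h2, ← ENNReal.ofReal_pow (by norm_num), ← ENNReal.ofReal_pow (by norm_num),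
            ← ENNReal.ofReal_ofNat, ← ENNReal.ofReal_mul (by positivity),
            ← ENNReal.ofReal_mul (by positivity),
            ← ENNReal.ofReal_add (by positivity) (by positivity)]
          apply ENNReal.ofReal_le_ofReal
          norm_num
  by_contra h0
  push_neg at h0
  have h0' : μ (EP2 μ) = 0 := le_antisymm h0 zero_le
  have : (1:ℝ≥0∞) ≤ 2⁻¹ := by
    calc (1:ℝ≥0∞) = μ univ := (measure_univ (μ := μ)).symm
      _ ≤ μ (EP2 μ) + μ (EP2 μ)ᶜ := by
          rw [show (univ : Set HomeoPlusI) = EP2 μ ∪ (EP2 μ)ᶜ by rw [union_compl_self]]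
          exact measure_union_le _ _
      _ = μ (EP2 μ)ᶜ := by rw [h0', zero_add]
      _ ≤ 2⁻¹ := hc
  have : ¬ ((1:ℝ≥0∞) ≤ 2⁻¹) := by
    rw [show ((2:ℝ≥0∞))⁻¹ = ENNReal.ofReal (1/2) by
      rw [ENNReal.ofReal_div_of_pos] <;> norm_num]
    intro hcon
    have := le_trans (le_refl (1:ℝ≥0∞)) hcon
    rw [show (1:ℝ≥0∞) = ENNReal.ofReal 1 by simp] at this
    have := (ENNReal.ofReal_le_ofReal_iff (by norm_num)).mp this
    norm_num at this
  exact this ‹(1:ℝ≥0∞) ≤ 2⁻¹›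

lemma mul_coe_apply (g u : HomeoPlusI) (x : I) :
    ((g * u : HomeoPlusI) : I ≃ₜ I) x = (g : I ≃ₜ I) ((u : I ≃ₜ I) x) := rfl

lemma EP2_constraint (u : HomeoPlusI) (hu : u ∈ EP2 μ) (k : ℤ) :
    (((u : I ≃ₜ I) (cl ((deP2 μ).X k)) : I) : ℝ) ≤ (dgP2 μ).X k := by
  rcases le_or_gt k 0 with hk | hk
  · have h := (mem_iInter.mp hu.1) (-k).toNat
    simp only [mem_setOf_eq] at h
    simp only [SideData.X, deP2, dgP2, if_pos hk]
    exact h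
  · have h := (mem_iInter.mp hu.2) (k.toNat - 1)
    simp only [mem_setOf_eq] at h
    simp only [SideData.X, deP2, dgP2, if_neg (not_le.mpr hk)]
    have hn : k.toNat - 1 + 1 = k.toNat := by omega
    rw [hn] at h
    exact h

lemma part2_pointwise (u : HomeoPlusI) (hu : u ∈ EP2 μ) (x : I)
    (hx : (x:ℝ) ∈ Ioo (0:ℝ) 1) :
    ((((interpH (dgP2 μ) (dvP2 q μ) * u : HomeoPlusI) : I ≃ₜ I) x : I) : ℝ)
      < (((q : I ≃ₜ I) x : I) : ℝ) := by
  obtain ⟨k, hk1, hk2⟩ := (deP2 μ).bracket hx.1 hx.2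
  set g := interpH (dgP2 μ) (dvP2 q μ) with hg
  have hXk1 := (deP2 μ).mem_Ioo (k+1)
  have hGk1 := (dgP2 μ).mem_Ioo (k+1)
  have h1 : x ≤ cl ((deP2 μ).X (k+1)) := Subtype.coe_le_coe.mp
    (by rw [cl_coe hXk1.1.le hXk1.2.le]; exact hk2.le)
  have h2 : ((u : I ≃ₜ I) x : I) ≤ cl ((dgP2 μ).X (k+1)) := by
    apply Subtype.coe_le_coe.mp
    rw [cl_coe hGk1.1.le hGk1.2.le]
    calc (((u : I ≃ₜ I) x : I) : ℝ)
        ≤ (((u : I ≃ₜ I) (cl ((deP2 μ).X (k+1))) : I) : ℝ) := Subtype.coe_le_coe.mpr (u.2 h1)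
      _ ≤ (dgP2 μ).X (k+1) := EP2_constraint μ u hu (k+1)
  have h3 : (g : I ≃ₜ I) ((u : I ≃ₜ I) x) ≤ (g : I ≃ₜ I) (cl ((dgP2 μ).X (k+1))) :=
    interpH_mono _ _ h2
  have h3' := Subtype.coe_le_coe.mpr h3
  have h4 : (((g : I ≃ₜ I) (cl ((dgP2 μ).X (k+1))) : I) : ℝ) = (dvP2 q μ).X (k+1) :=
    interpH_X _ _ (k+1) _ (cl_coe hGk1.1.le hGk1.2.le)
  have h5 : (dvP2 q μ).X (k+1) = qe q ((deP2 μ).X (k-1)) := by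
    have h := dvP2_eq q μ (k+1)
    rwa [show k+1-2 = k-1 by ring] at h
  have hXk := (deP2 μ).mem_Ioo k
  have hXkm := (deP2 μ).mem_Ioo (k-1)
  have h6 : qe q ((deP2 μ).X (k-1)) < qe q ((deP2 μ).X k) :=
    qe_lt_qe q hXkm.1.le ((deP2 μ).strictMono (by omega)) hXk.2.le
  have h7 : qe q ((deP2 μ).X k) ≤ (((q : I ≃ₜ I) x : I) : ℝ) := by
    have hcl : cl ((deP2 μ).X k) ≤ x := Subtype.coe_le_coe.mp
      (by rw [cl_coe hXk.1.le hXk.2.le]; exact hk1)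
    exact Subtype.coe_le_coe.mpr (q.2 hcl)
  rw [mul_coe_apply]
  linarith

lemma part2_exists :
    ∃ (g h : HomeoPlusI) (E : Set HomeoPlusI), 0 < μ E ∧ ∀ u ∈ E,
      g * u * h ∈ ({f : HomeoPlusI |
        {x : I | (x : ℝ) ∈ Set.Ioo (0 : ℝ) 1 ∧ (f : I ≃ₜ I) x = (q : I ≃ₜ I) x}.Infinite}ᶜ) := by
  refine ⟨interpH (dgP2 μ) (dvP2 q μ), 1, EP2 μ, EP2_pos μ, fun u hu => ?_⟩
  simp only [mem_compl_iff, mem_setOf_eq]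
  intro hinf
  have hempty : {x : I | (x : ℝ) ∈ Set.Ioo (0 : ℝ) 1 ∧
      ((interpH (dgP2 μ) (dvP2 q μ) * u * 1 : HomeoPlusI) : I ≃ₜ I) x = (q : I ≃ₜ I) x} = ∅ := by
    apply eq_empty_iff_forall_notMem.mpr
    rintro x ⟨hx, heq⟩
    rw [mul_one] at heq
    have := part2_pointwise q μ u hu x hx
    rw [heq] at this
    exact lt_irrefl _ this
  rw [hempty] at hinf
  exact Set.not_infinite.mpr finite_empty hinf

end Part2Main

section Part1

variable (q : HomeoPlusI) (μ : Measure HomeoPlusI) [IsProbabilityMeasure μ]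

/-- The fixed crossing intervals `[α n, β n]`, decreasing dyadically to `0`. -/
def βd : ℕ → ℝ := fun n => (2⁻¹:ℝ)^(n+1)
def αd : ℕ → ℝ := fun n => 3 * (2⁻¹:ℝ)^(n+3)

lemma αd_pos (n : ℕ) : 0 < αd n := by unfold αd; positivity
lemma βd_pos (n : ℕ) : 0 < βd n := by unfold βd; positivity
lemma αd_lt_βd (n : ℕ) : αd n < βd n := by
  unfold αd βd
  have h : (2⁻¹:ℝ)^(n+3) = (2⁻¹)^(n+1) * (2⁻¹)^2 := by rw [← pow_add]
  rw [h]
  have : (0:ℝ) < (2⁻¹:ℝ)^(n+1) := by positivity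
  nlinarith
lemma βd_succ_lt_αd (n : ℕ) : βd (n+1) < αd n := by
  have hx : (0:ℝ) < (2⁻¹:ℝ)^(n+1) := by positivity
  have e2 : (2⁻¹:ℝ)^(n+1+1) = (2⁻¹:ℝ)^(n+1) * 2⁻¹ := pow_succ _ _
  have e3 : (2⁻¹:ℝ)^(n+3) = (2⁻¹:ℝ)^(n+1) * 2⁻¹ * 2⁻¹ := by
    rw [show n+3 = (n+1)+1+1 by omega, pow_succ, pow_succ]
  unfold αd βd
  rw [e2, e3]
  nlinarith
lemma βd_lt_one (n : ℕ) : βd n < 1 := by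
  unfold βd
  exact pow_lt_one₀ (by norm_num) (by norm_num) (by omega)
lemma βd_anti : StrictAnti βd := fun m n hmn =>
  pow_lt_pow_right_of_lt_one₀ (by norm_num) (by norm_num) (by omega)
lemma βd_small (t : ℝ) (ht : 0 < t) : ∃ n, βd n < t := by
  obtain ⟨n, hn⟩ := exists_pow_lt_of_lt_one ht (by norm_num : (2⁻¹:ℝ) < 1)
  exact ⟨n, lt_of_le_of_lt (pow_le_pow_of_le_one (by norm_num) (by norm_num) (by omega)) hn⟩

/-- State property for the Part-1 machine: `c = (a, b, δ, ε)` given previous `(a₀, δ₀)`. -/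
def P1 (n : ℕ) (p : ℝ × ℝ) (c : ℝ × ℝ × ℝ × ℝ) : Prop :=
  0 < c.1 ∧ c.1 < c.2.1 ∧ c.2.1 < p.1 ∧ c.2.1 ≤ (2⁻¹:ℝ)^(n+1) ∧
  0 < c.2.2.1 ∧ c.2.2.1 < c.2.2.2 ∧ c.2.2.2 < p.2 ∧ c.2.2.2 ≤ (2⁻¹:ℝ)^(n+1) ∧
  μ {u : HomeoPlusI | (((u : I ≃ₜ I) (cl c.1) : I) : ℝ) ≤ c.2.2.1}ᶜ ≤ (2⁻¹:ℝ≥0∞)^(n+3) ∧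
  μ {u : HomeoPlusI | c.2.2.2 ≤ (((u : I ≃ₜ I) (cl c.2.1) : I) : ℝ)}ᶜ ≤ (2⁻¹:ℝ≥0∞)^(n+3)

lemma step1 (n : ℕ) (p : ℝ × ℝ) (hp1 : 0 < p.1) (hp2 : 0 < p.2) :
    ∃ c, P1 μ n p c := by
  set b := min (p.1/2) ((2⁻¹:ℝ)^(n+1)) with hb
  have hb0 : 0 < b := lt_min (by linarith) (by positivity)
  have hb1 : b < 1 := lt_of_le_of_lt (min_le_right _ _)
    (pow_lt_one₀ (by norm_num) (by norm_num) (by omega))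
  obtain ⟨ε, hε0, hεcap, hεm⟩ := exists_value_small μ b
    (min (p.2/2) ((2⁻¹:ℝ)^(n+1))) hb0 hb1
    (lt_min (by linarith) (by positivity)) (half_pow_pos (n+3))
  have hδ1 : ε/2 ≤ 1 := by
    have : ε ≤ (2⁻¹:ℝ)^(n+1) := le_trans hεcap (min_le_right _ _)
    have : (2⁻¹:ℝ)^(n+1) ≤ 1 := pow_le_one₀ (by norm_num) (by norm_num)
    linarith
  obtain ⟨a, ha0, hab, ham⟩ := exists_point_small μ (ε/2) b (by linarith) hδ1 hb0
    (half_pow_pos (n+3))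
  refine ⟨(a, b, ε/2, ε), ha0, hab, ?_, min_le_right _ _, by linarith, by linarith,
    ?_, le_trans hεcap (min_le_right _ _), ham, hεm⟩
  · exact lt_of_le_of_lt (min_le_left _ _) (by linarith)
  · exact lt_of_le_of_lt hεcap (lt_of_le_of_lt (min_le_left _ _) (by linarith))

def stp1 : ℕ → (ℝ × ℝ) → (ℝ × ℝ × ℝ × ℝ) := fun n p =>
  if h : 0 < p.1 ∧ 0 < p.2 then (step1 μ n p h.1 h.2).choose else (1,1,1,1)

def st1 : ℕ → ℝ × ℝ × ℝ × ℝ := fun n =>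
  Nat.rec (stp1 μ 0 (1,1)) (fun m c => stp1 μ (m+1) (c.1, c.2.2.1)) n

def aP : ℕ → ℝ := fun n => (st1 μ n).1
def bP : ℕ → ℝ := fun n => (st1 μ n).2.1
def δP : ℕ → ℝ := fun n => (st1 μ n).2.2.1
def εP : ℕ → ℝ := fun n => (st1 μ n).2.2.2

def prevP : ℕ → ℝ × ℝ := fun n => Nat.casesOn n (1,1) (fun m => (aP μ m, δP μ m))

lemma st1_spec : ∀ n, P1 μ n (prevP μ n) (st1 μ n) := by
  intro n
  induction n with
  | zero =>
      show P1 μ 0 (1,1) (stp1 μ 0 (1,1))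
      rw [stp1, dif_pos (by constructor <;> norm_num : (0:ℝ) < (1:ℝ) ∧ (0:ℝ) < (1:ℝ))]
      exact (step1 μ 0 (1,1) one_pos one_pos).choose_spec
  | succ m ih =>
      have hpos : 0 < aP μ m ∧ 0 < δP μ m := ⟨ih.1, ih.2.2.2.2.1⟩
      show P1 μ (m+1) (aP μ m, δP μ m) (stp1 μ (m+1) (aP μ m, δP μ m))
      rw [stp1, dif_pos hpos]
      exact (step1 μ (m+1) (aP μ m, δP μ m) hpos.1 hpos.2).choose_spec

lemma aP_pos (n : ℕ) : 0 < aP μ n := (st1_spec μ n).1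
lemma aP_lt_bP (n : ℕ) : aP μ n < bP μ n := (st1_spec μ n).2.1
lemma bP_succ_lt_aP (n : ℕ) : bP μ (n+1) < aP μ n := (st1_spec μ (n+1)).2.2.1
lemma bP_le (n : ℕ) : bP μ n ≤ (2⁻¹:ℝ)^(n+1) := (st1_spec μ n).2.2.2.1
lemma δP_pos (n : ℕ) : 0 < δP μ n := (st1_spec μ n).2.2.2.2.1
lemma δP_lt_εP (n : ℕ) : δP μ n < εP μ n := (st1_spec μ n).2.2.2.2.2.1
lemma εP_succ_lt_δP (n : ℕ) : εP μ (n+1) < δP μ n := (st1_spec μ (n+1)).2.2.2.2.2.2.1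
lemma εP_le (n : ℕ) : εP μ n ≤ (2⁻¹:ℝ)^(n+1) := (st1_spec μ n).2.2.2.2.2.2.2.1
lemma aP_meas (n : ℕ) :
    μ {u : HomeoPlusI | (((u : I ≃ₜ I) (cl (aP μ n)) : I) : ℝ) ≤ δP μ n}ᶜ
      ≤ (2⁻¹:ℝ≥0∞)^(n+3) := (st1_spec μ n).2.2.2.2.2.2.2.2.1
lemma bP_meas (n : ℕ) :
    μ {u : HomeoPlusI | εP μ n ≤ (((u : I ≃ₜ I) (cl (bP μ n)) : I) : ℝ)}ᶜ
      ≤ (2⁻¹:ℝ≥0∞)^(n+3) := (st1_spec μ n).2.2.2.2.2.2.2.2.2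

lemma bP_lt_one (n : ℕ) : bP μ n < 1 :=
  lt_of_le_of_lt (bP_le μ n) (pow_lt_one₀ (by norm_num) (by norm_num) (by omega))
lemma bP_pos (n : ℕ) : 0 < bP μ n := lt_trans (aP_pos μ n) (aP_lt_bP μ n)
lemma εP_pos (n : ℕ) : 0 < εP μ n := lt_trans (δP_pos μ n) (δP_lt_εP μ n)
lemma εP_lt_one (n : ℕ) : εP μ n < 1 :=
  lt_of_le_of_lt (εP_le μ n) (pow_lt_one₀ (by norm_num) (by norm_num) (by omega))

/-- Interleaving an alternating pair of sequences. -/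
def ilv (u v : ℕ → ℝ) : ℕ → ℝ := fun m => if Even m then u (m/2) else v (m/2)

lemma ilv_even (u v : ℕ → ℝ) (n : ℕ) : ilv u v (2*n) = u n := by
  rw [ilv, if_pos (even_two_mul n)]
  congr 1
  omega

lemma ilv_odd (u v : ℕ → ℝ) (n : ℕ) : ilv u v (2*n+1) = v n := by
  have h : ¬ Even (2*n+1) := by
    rw [Nat.even_add_one]
    simp [even_two_mul]
  rw [ilv, if_neg h]
  congr 1
  omega

lemma ilv_anti (u v : ℕ → ℝ) (h1 : ∀ n, v n < u n) (h2 : ∀ n, u (n+1) < v n) :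
    StrictAnti (ilv u v) := by
  apply strictAnti_nat_of_succ_lt
  intro m
  rcases Nat.even_or_odd m with he | ho
  · obtain ⟨k, hk⟩ := he
    have hm : m = 2*k := by omega
    subst hm
    rw [ilv_even, show 2*k+1 = 2*k+1 from rfl, ilv_odd]
    exact h1 k
  · obtain ⟨k, hk⟩ := ho
    subst hk
    rw [ilv_odd, show 2*k+1+1 = 2*(k+1) by ring, ilv_even]
    exact h2 k

/-- Geometric approach-to-one filler sequences. -/
def fill (c : ℝ) : ℕ → ℝ := fun k => 1 - (1 - c) * (2⁻¹:ℝ)^k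

lemma fill_zero (c : ℝ) : fill c 0 = c := by simp [fill]
lemma fill_mono {c : ℝ} (hc : c < 1) : StrictMono (fill c) := by
  intro m n hmn
  have h : (2⁻¹:ℝ)^n < (2⁻¹:ℝ)^m :=
    pow_lt_pow_right_of_lt_one₀ (by norm_num) (by norm_num) hmn
  simp only [fill]
  nlinarith
lemma fill_lt_one {c : ℝ} (hc : c < 1) (k : ℕ) : fill c k < 1 := by
  have : (0:ℝ) < (2⁻¹:ℝ)^k := by positivity
  simp only [fill]; nlinarith
lemma fill_big {c : ℝ} (hc : c < 1) (t : ℝ) (ht : t < 1) : ∃ k, t < fill c k := by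
  obtain ⟨k, hk⟩ := exists_pow_lt_of_lt_one
    (div_pos (show (0:ℝ) < 1 - t by linarith) (show (0:ℝ) < 1 - c by linarith))
    (by norm_num : (2⁻¹:ℝ) < 1)
  refine ⟨k, ?_⟩
  rw [lt_div_iff₀ (show (0:ℝ) < 1 - c by linarith)] at hk
  simp only [fill]
  nlinarith

end Part1

section Part1Main

variable (q : HomeoPlusI) (μ : Measure HomeoPlusI) [IsProbabilityMeasure μ]

lemma ilv_cases (u v : ℕ → ℝ) (P : ℝ → Prop) (hu : ∀ n, P (u n)) (hv : ∀ n, P (v n)) :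
    ∀ m, P (ilv u v m) := by
  intro m
  rcases Nat.even_or_odd m with ⟨k, hk⟩ | ⟨k, hk⟩
  · rw [show m = 2*k by omega, ilv_even]; exact hu k
  · rw [hk, ilv_odd]; exact hv k

/-- x-data of `h` for Part 1. -/
def dxh : SideData where
  A := ilv βd αd
  R := fill (βd 0)
  hA := ilv_anti βd αd αd_lt_βd βd_succ_lt_αd
  hR := fill_mono (βd_lt_one 0)
  hAR := by rw [fill_zero]; exact (show ilv βd αd (2*0) = βd 0 from ilv_even βd αd 0)
  hApos := ilv_cases βd αd _ βd_pos αd_pos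
  hR1 := fill_lt_one (βd_lt_one 0)
  hAsmall := fun t ht => by
    obtain ⟨n, hn⟩ := βd_small t ht
    exact ⟨2*n, by rw [ilv_even]; exact hn⟩
  hRbig := fill_big (βd_lt_one 0)

/-- y-data of `h` for Part 1. -/
def dyh : SideData where
  A := ilv (bP μ) (aP μ)
  R := fill (bP μ 0)
  hA := ilv_anti _ _ (aP_lt_bP μ) (bP_succ_lt_aP μ)
  hR := fill_mono (bP_lt_one μ 0)
  hAR := by rw [fill_zero]; exact (show ilv (bP μ) (aP μ) (2*0) = bP μ 0 from ilv_even _ _ 0)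
  hApos := ilv_cases _ _ _ (bP_pos μ) (aP_pos μ)
  hR1 := fill_lt_one (bP_lt_one μ 0)
  hAsmall := fun t ht => by
    obtain ⟨n, hn⟩ := βd_small t ht
    exact ⟨2*n, by rw [ilv_even]; exact lt_of_le_of_lt (bP_le μ n) hn⟩
  hRbig := fill_big (bP_lt_one μ 0)

/-- x-data of `g` for Part 1. -/
def dxg : SideData where
  A := ilv (εP μ) (δP μ)
  R := fill (εP μ 0)
  hA := ilv_anti _ _ (δP_lt_εP μ) (εP_succ_lt_δP μ)
  hR := fill_mono (εP_lt_one μ 0)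
  hAR := by rw [fill_zero]; exact (show ilv (εP μ) (δP μ) (2*0) = εP μ 0 from ilv_even _ _ 0)
  hApos := ilv_cases _ _ _ (εP_pos μ) (δP_pos μ)
  hR1 := fill_lt_one (εP_lt_one μ 0)
  hAsmall := fun t ht => by
    obtain ⟨n, hn⟩ := βd_small t ht
    exact ⟨2*n, by rw [ilv_even]; exact lt_of_le_of_lt (εP_le μ n) hn⟩
  hRbig := fill_big (εP_lt_one μ 0)

/-- y-data of `g` for Part 1: the values of `q` on the crossing interval endpoints. -/
def dyg : SideData where
  A := ilv (fun n => qe q (βd n)) (fun n => qe q (αd n))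
  R := fill (qe q (βd 0))
  hA := ilv_anti _ _
    (fun n => qe_lt_qe q (αd_pos n).le (αd_lt_βd n) (βd_lt_one n).le)
    (fun n => qe_lt_qe q (βd_pos (n+1)).le (βd_succ_lt_αd n)
      (lt_trans (αd_lt_βd n) (βd_lt_one n)).le)
  hR := fill_mono (qe_lt_one q (βd_pos 0).le (βd_lt_one 0))
  hAR := by
    rw [fill_zero]
    exact (show ilv _ _ (2*0) = qe q (βd 0) from ilv_even _ _ 0)
  hApos := ilv_cases _ _ _
    (fun n => qe_pos q (βd_pos n) (βd_lt_one n).le)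
    (fun n => qe_pos q (αd_pos n) (lt_trans (αd_lt_βd n) (βd_lt_one n)).le)
  hR1 := fill_lt_one (qe_lt_one q (βd_pos 0).le (βd_lt_one 0))
  hAsmall := fun t ht => by
    obtain ⟨δ', hδ'0, hδ'⟩ := qe_small q t ht
    obtain ⟨n, hn⟩ := βd_small δ' hδ'0
    exact ⟨2*n, by rw [ilv_even]; exact hδ' _ (βd_pos n) hn⟩
  hRbig := fill_big (qe_lt_one q (βd_pos 0).le (βd_lt_one 0))

lemma hm1_α (n : ℕ) :
    (((interpH dxh (dyh μ) : HomeoPlusI) : I ≃ₜ I) (cl (αd n)) : ℝ) = aP μ n := by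
  have h := interpH_X dxh (dyh μ) (-(2*n+1 : ℕ) : ℤ) (cl (αd n)) (by
    rw [SideData.X_neg]
    show (cl (αd n) : ℝ) = dxh.A (2*n+1)
    rw [cl_coe (αd_pos n).le (lt_trans (αd_lt_βd n) (βd_lt_one n)).le]
    exact (show αd n = ilv βd αd (2*n+1) from (ilv_odd βd αd n).symm))
  rw [h, SideData.X_neg]
  exact (show (dyh μ).A (2*n+1) = aP μ n from ilv_odd _ _ n)

lemma hm1_β (n : ℕ) :
    (((interpH dxh (dyh μ) : HomeoPlusI) : I ≃ₜ I) (cl (βd n)) : ℝ) = bP μ n := by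
  have h := interpH_X dxh (dyh μ) (-(2*n : ℕ) : ℤ) (cl (βd n)) (by
    rw [SideData.X_neg]
    show (cl (βd n) : ℝ) = dxh.A (2*n)
    rw [cl_coe (βd_pos n).le (βd_lt_one n).le]
    exact (show βd n = ilv βd αd (2*n) from (ilv_even βd αd n).symm))
  rw [h, SideData.X_neg]
  exact (show (dyh μ).A (2*n) = bP μ n from ilv_even _ _ n)

lemma gm1_δ (n : ℕ) :
    (((interpH (dxg μ) (dyg q) : HomeoPlusI) : I ≃ₜ I) (cl (δP μ n)) : ℝ) = qe q (αd n) := by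
  have h := interpH_X (dxg μ) (dyg q) (-(2*n+1 : ℕ) : ℤ) (cl (δP μ n)) (by
    rw [SideData.X_neg]
    show (cl (δP μ n) : ℝ) = (dxg μ).A (2*n+1)
    rw [cl_coe (δP_pos μ n).le (lt_trans (δP_lt_εP μ n) (εP_lt_one μ n)).le]
    exact (show δP μ n = ilv (εP μ) (δP μ) (2*n+1) from (ilv_odd _ _ n).symm))
  rw [h, SideData.X_neg]
  exact ilv_odd (fun n => qe q (βd n)) (fun n => qe q (αd n)) n

lemma gm1_ε (n : ℕ) :
    (((interpH (dxg μ) (dyg q) : HomeoPlusI) : I ≃ₜ I) (cl (εP μ n)) : ℝ) = qe q (βd n) := by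
  have h := interpH_X (dxg μ) (dyg q) (-(2*n : ℕ) : ℤ) (cl (εP μ n)) (by
    rw [SideData.X_neg]
    show (cl (εP μ n) : ℝ) = (dxg μ).A (2*n)
    rw [cl_coe (εP_pos μ n).le (εP_lt_one μ n).le]
    exact (show εP μ n = ilv (εP μ) (δP μ) (2*n) from (ilv_even _ _ n).symm))
  rw [h, SideData.X_neg]
  exact ilv_even (fun n => qe q (βd n)) (fun n => qe q (αd n)) n

def EP1 : Set HomeoPlusI :=
  ⋂ n : ℕ, ({u : HomeoPlusI | (((u : I ≃ₜ I) (cl (aP μ n)) : I) : ℝ) ≤ δP μ n} ∩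
    {u : HomeoPlusI | εP μ n ≤ (((u : I ≃ₜ I) (cl (bP μ n)) : I) : ℝ)})

lemma EP1_pos : 0 < μ (EP1 μ) := by
  have hc : μ (EP1 μ)ᶜ ≤ 2⁻¹ := by
    have hsub : (EP1 μ)ᶜ ⊆ ⋃ n : ℕ,
        ({u : HomeoPlusI | (((u : I ≃ₜ I) (cl (aP μ n)) : I) : ℝ) ≤ δP μ n}ᶜ ∪
          {u : HomeoPlusI | εP μ n ≤ (((u : I ≃ₜ I) (cl (bP μ n)) : I) : ℝ)}ᶜ) := by
      intro u hu
      simp only [EP1, mem_compl_iff, mem_iInter, not_forall, mem_inter_iff, not_and_or] at hu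
      obtain ⟨n, hn⟩ := hu
      exact mem_iUnion.mpr ⟨n, by
        rcases hn with hn | hn
        · exact Or.inl hn
        · exact Or.inr hn⟩
    calc μ (EP1 μ)ᶜ ≤ _ := measure_mono hsub
      _ ≤ ∑' n : ℕ, ((2⁻¹:ℝ≥0∞)^(n+3) + (2⁻¹:ℝ≥0∞)^(n+3)) := by
          apply le_trans (measure_iUnion_le _)
          apply ENNReal.tsum_le_tsum
          intro n
          exact le_trans (measure_union_le _ _) (add_le_add (aP_meas μ n) (bP_meas μ n))
      _ = (2⁻¹:ℝ≥0∞)^3*2 + (2⁻¹:ℝ≥0∞)^3*2 := by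
          rw [ENNReal.tsum_add, geom_tail]
      _ ≤ 2⁻¹ := by
          have h2 : ((2:ℝ≥0∞))⁻¹ = ENNReal.ofReal (1/2) := by
            rw [ENNReal.ofReal_div_of_pos] <;> norm_num
          rw [h2, ← ENNReal.ofReal_pow (by norm_num), ← ENNReal.ofReal_ofNat,
            ← ENNReal.ofReal_mul (by positivity),
            ← ENNReal.ofReal_add (by positivity) (by positivity)]
          apply ENNReal.ofReal_le_ofReal
          norm_num
  by_contra h0
  push_neg at h0
  have h0' : μ (EP1 μ) = 0 := le_antisymm h0 zero_le
  have hle : (1:ℝ≥0∞) ≤ 2⁻¹ := by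
    calc (1:ℝ≥0∞) = μ univ := (measure_univ (μ := μ)).symm
      _ ≤ μ (EP1 μ) + μ (EP1 μ)ᶜ := by
          rw [show (univ : Set HomeoPlusI) = EP1 μ ∪ (EP1 μ)ᶜ by rw [union_compl_self]]
          exact measure_union_le _ _
      _ = μ (EP1 μ)ᶜ := by rw [h0', zero_add]
      _ ≤ 2⁻¹ := hc
  have : ¬ ((1:ℝ≥0∞) ≤ 2⁻¹) := by
    rw [show ((2:ℝ≥0∞))⁻¹ = ENNReal.ofReal (1/2) by
      rw [ENNReal.ofReal_div_of_pos] <;> norm_num]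
    intro hcon
    rw [show (1:ℝ≥0∞) = ENNReal.ofReal 1 by simp] at hcon
    have := (ENNReal.ofReal_le_ofReal_iff (by norm_num)).mp hcon
    norm_num at this
  exact this hle

lemma mul3_coe_apply (g u h : HomeoPlusI) (x : I) :
    ((g * u * h : HomeoPlusI) : I ≃ₜ I) x
      = (g : I ≃ₜ I) ((u : I ≃ₜ I) ((h : I ≃ₜ I) x)) := rfl

lemma part1_cross (u : HomeoPlusI) (hu : u ∈ EP1 μ) (n : ℕ) :
    ∃ x : I, (x:ℝ) ∈ Icc (αd n) (βd n) ∧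
      ((interpH (dxg μ) (dyg q) * u * interpH dxh (dyh μ) : HomeoPlusI) : I ≃ₜ I) x
        = (q : I ≃ₜ I) x := by
  set g := interpH (dxg μ) (dyg q) with hgdef
  set h := interpH dxh (dyh μ) with hhdef
  set f := g * u * h with hfdef
  have hu1 := (mem_iInter.mp hu n).1
  have hu2 := (mem_iInter.mp hu n).2
  simp only [mem_setOf_eq] at hu1 hu2
  set a : I := cl (αd n) with hadef
  set b : I := cl (βd n) with hbdef
  -- f a ≤ q a
  have hha : (h : I ≃ₜ I) a = cl (aP μ n) := by
    apply Subtype.ext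
    rw [hm1_α μ n, cl_coe (aP_pos μ n).le (lt_trans (aP_lt_bP μ n) (bP_lt_one μ n)).le]
  have hua : ((u : I ≃ₜ I) ((h : I ≃ₜ I) a)) ≤ cl (δP μ n) := by
    rw [hha]
    apply Subtype.coe_le_coe.mp
    rw [cl_coe (δP_pos μ n).le (lt_trans (δP_lt_εP μ n) (εP_lt_one μ n)).le]
    exact hu1
  have hfa : ((f : I ≃ₜ I) a : ℝ) ≤ ((q : I ≃ₜ I) a : ℝ) := by
    rw [hfdef, mul3_coe_apply]
    calc ((g : I ≃ₜ I) ((u : I ≃ₜ I) ((h : I ≃ₜ I) a)) : ℝ)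
        ≤ ((g : I ≃ₜ I) (cl (δP μ n)) : ℝ) := Subtype.coe_le_coe.mpr (interpH_mono _ _ hua)
      _ = qe q (αd n) := gm1_δ q μ n
      _ = ((q : I ≃ₜ I) a : ℝ) := rfl
  -- q b ≤ f b
  have hhb : (h : I ≃ₜ I) b = cl (bP μ n) := by
    apply Subtype.ext
    rw [hm1_β μ n, cl_coe (bP_pos μ n).le (bP_lt_one μ n).le]
  have hub : cl (εP μ n) ≤ ((u : I ≃ₜ I) ((h : I ≃ₜ I) b)) := by
    rw [hhb]
    apply Subtype.coe_le_coe.mp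
    rw [cl_coe (εP_pos μ n).le (εP_lt_one μ n).le]
    exact hu2
  have hfb : ((q : I ≃ₜ I) b : ℝ) ≤ ((f : I ≃ₜ I) b : ℝ) := by
    rw [hfdef, mul3_coe_apply]
    calc ((q : I ≃ₜ I) b : ℝ) = qe q (βd n) := rfl
      _ = ((g : I ≃ₜ I) (cl (εP μ n)) : ℝ) := (gm1_ε q μ n).symm
      _ ≤ ((g : I ≃ₜ I) ((u : I ≃ₜ I) ((h : I ≃ₜ I) b)) : ℝ) :=
          Subtype.coe_le_coe.mpr (interpH_mono _ _ hub)
  -- IVT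
  set φ : I → ℝ := fun y => ((f : I ≃ₜ I) y : ℝ) - ((q : I ≃ₜ I) y : ℝ) with hφdef
  have hφcont : Continuous φ := by
    apply Continuous.sub
    · exact continuous_subtype_val.comp (f : I ≃ₜ I).continuous
    · exact continuous_subtype_val.comp (q : I ≃ₜ I).continuous
  have hab : a ≤ b := Subtype.coe_le_coe.mp (by
    rw [hadef, hbdef, cl_coe (αd_pos n).le (lt_trans (αd_lt_βd n) (βd_lt_one n)).le,
      cl_coe (βd_pos n).le (βd_lt_one n).le]
    exact (αd_lt_βd n).le)
  set ψ : ℝ → ℝ := fun t => φ (cl t) with hψdef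
  have hclcont : Continuous cl := by
    apply Continuous.subtype_mk
    exact (continuous_const.max (continuous_id.min continuous_const))
  have hψcont : Continuous ψ := hφcont.comp hclcont
  have habR : αd n ≤ βd n := (αd_lt_βd n).le
  have hψa : ψ (αd n) = φ a := rfl
  have hψb : ψ (βd n) = φ b := rfl
  have h0 : (0:ℝ) ∈ Icc (ψ (αd n)) (ψ (βd n)) := by
    rw [hψa, hψb]
    exact ⟨by simp only [hφdef]; linarith, by simp only [hφdef]; linarith⟩
  obtain ⟨t, htmem, hψt⟩ := intermediate_value_Icc habR hψcont.continuousOn h0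
  refine ⟨cl t, ?_, ?_⟩
  · rw [cl_coe (le_trans (αd_pos n).le htmem.1)
      (le_trans htmem.2 (βd_lt_one n).le)]
    exact htmem
  · apply Subtype.ext
    exact sub_eq_zero.mp hψt

lemma part1_exists :
    ∃ (g h : HomeoPlusI) (E : Set HomeoPlusI), 0 < μ E ∧ ∀ u ∈ E,
      g * u * h ∈ {f : HomeoPlusI |
        {x : I | (x : ℝ) ∈ Set.Ioo (0 : ℝ) 1 ∧ (f : I ≃ₜ I) x = (q : I ≃ₜ I) x}.Infinite} := by
  refine ⟨interpH (dxg μ) (dyg q), interpH dxh (dyh μ), EP1 μ, EP1_pos μ, fun u hu => ?_⟩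
  simp only [mem_setOf_eq]
  set f := interpH (dxg μ) (dyg q) * u * interpH dxh (dyh μ) with hfdef
  have hcross := part1_cross q μ u hu
  set χ : ℕ → I := fun n => (hcross n).choose with hχdef
  have hχspec : ∀ n, ((χ n : ℝ) ∈ Icc (αd n) (βd n)) ∧
      (f : I ≃ₜ I) (χ n) = (q : I ≃ₜ I) (χ n) := fun n => (hcross n).choose_spec
  have hkey : ∀ {n m : ℕ}, n < m → (χ m : ℝ) < (χ n : ℝ) := by
    intro n m hnm
    calc (χ m : ℝ) ≤ βd m := (hχspec m).1.2
      _ ≤ βd (n+1) := (βd_anti.antitone (by omega))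
      _ < αd n := βd_succ_lt_αd n
      _ ≤ (χ n : ℝ) := (hχspec n).1.1
  refine Set.infinite_of_injective_forall_mem (f := χ) ?_ ?_
  · intro n m hnm
    by_contra hne
    rcases lt_trichotomy n m with h | h | h
    · exact absurd (congrArg (fun z : I => (z:ℝ)) hnm) (ne_of_gt (hkey h))
    · exact hne h
    · exact absurd (congrArg (fun z : I => (z:ℝ)) hnm) (ne_of_lt (hkey h))
  · intro n
    refine ⟨⟨?_, ?_⟩, (hχspec n).2⟩
    · exact lt_of_lt_of_le (αd_pos n) (hχspec n).1.1
    · exact lt_of_le_of_lt (hχspec n).1.2 (βd_lt_one n)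

end Part1Main

end HP


/-- For every `q ∈ Homeo⁺([0,1])`, the set of `f` crossing the curve of `q` infinitely many
times in `(0,1)` is neither Haar null nor co-Haar null. -/
theorem stmt_7 (q : HomeoPlusI) :
    ¬ IsHaarNull {f : HomeoPlusI |
        {x : I | (x : ℝ) ∈ Set.Ioo (0 : ℝ) 1 ∧ (f : I ≃ₜ I) x = (q : I ≃ₜ I) x}.Infinite} ∧
      ¬ IsHaarNull ({f : HomeoPlusI |
        {x : I | (x : ℝ) ∈ Set.Ioo (0 : ℝ) 1 ∧ (f : I ≃ₜ I) x = (q : I ≃ₜ I) x}.Infinite}ᶜ) := by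
  constructor
  · apply HP.not_isHaarNull_of
    intro μ hμ
    haveI := hμ
    exact HP.part1_exists q μ
  · apply HP.not_isHaarNull_of
    intro μ hμ
    haveI := hμ
    exact HP.part2_exists q μ

end
end
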